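/- arXiv:1302.3426 — 10 statements merged into one kernel-verified Lean document; each statement's English description precedes it below -/
import Mathlib

section
/- Let I be an ideal on S, C̄ = ⟨C_δ : δ ∈ S⟩ with C_δ ⊆ δ, let θ be an infinite regular cardinal, let J be a θ-directed partial order, and let t̄ = ⟨t_δ : δ ∈ S⟩ be a witness of OBB_J(C̄, I). For f : Dom(C̄) → J put Fail(f) := {δ ∈ S : ¬(∀α ∈ C_δ) f(α) ≤_J t_δ}, and let I*_t̄ := {A ⊆ S : A ⊆ ∪_{j<j*} Fail(f_j) for some j* < θ and some functions f_j : Dom(C̄) → J}. Then I*_t̄ is a θ-complete ideal on S (in particular S ∉ I*_t̄, i.e., for any j* < θ and any functions f_j : Dom(C̄) → J (j < j*) there is δ ∈ S with f_j(α) ≤_J t_δ for all j < j* and α ∈ C_δ), and t̄ witnesses OBB⁺_J(C̄, I*_t̄). -/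
open Set Cardinal

universe u v

/-- `I` is an ideal on the set `S` of ordinals: it contains the empty set, is closed under
subsets and finite unions, consists of subsets of `S`, and `S ∉ I`. -/
structure IsIdealOn (I : Set (Set Ordinal)) (S : Set Ordinal) : Prop where
  mem_subset : ∀ A ∈ I, A ⊆ S
  empty_mem : ∅ ∈ I
  mono : ∀ A ∈ I, ∀ B ⊆ A, B ∈ I
  union_mem : ∀ A ∈ I, ∀ B ∈ I, A ∪ B ∈ I
  base_not_mem : S ∉ I

/-- `I` is an ideal on the type `ι`. -/
structure IsIdeal {ι : Type u} (I : Set (Set ι)) : Prop where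
  empty_mem : ∅ ∈ I
  mono : ∀ A ∈ I, ∀ B ⊆ A, B ∈ I
  union_mem : ∀ A ∈ I, ∀ B ∈ I, A ∪ B ∈ I
  univ_not_mem : Set.univ ∉ I

/-- `I` is `μ`-complete: closed under unions of fewer than `μ` of its members. -/
def IdealComplete {α : Type u} (I : Set (Set α)) (μ : Cardinal.{u}) : Prop :=
  ∀ T : Set (Set α), T ⊆ I → #T < μ → ⋃₀ T ∈ I

/-- The order type of a set of ordinals. -/
noncomputable def otp (s : Set Ordinal.{0}) : Ordinal.{1} :=
  Ordinal.type (Subrel ((· < ·) : Ordinal → Ordinal → Prop) (· ∈ s))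

/-- `OBB_J(C̄, I)`: there is `t̄ = ⟨t_δ : δ ∈ S⟩` in `J` such that for every
`f : Dom(C̄) → J` the set `{δ ∈ S : ∀ α ∈ C_δ, f α ≤ t_δ}` is `I`-positive. -/
def OBB (J : Type u) [PartialOrder J] (S : Set Ordinal) (C : Ordinal → Set Ordinal)
    (I : Set (Set Ordinal)) : Prop :=
  ∃ t : Ordinal → J, ∀ f : Ordinal → J,
    {δ ∈ S | ∀ α ∈ C δ, f α ≤ t δ} ∉ I

/-- `OBB⁺_J(C̄, I)`: as `OBB` but the good set equals `S` mod `I`. -/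
def OBBplus (J : Type u) [PartialOrder J] (S : Set Ordinal) (C : Ordinal → Set Ordinal)
    (I : Set (Set Ordinal)) : Prop :=
  ∃ t : Ordinal → J, ∀ f : Ordinal → J,
    S \ {δ ∈ S | ∀ α ∈ C δ, f α ≤ t δ} ∈ I

/-- `C̄` is tree-like. -/
def TreeLike (S : Set Ordinal) (C : Ordinal → Set Ordinal) : Prop :=
  ∀ δ₁ ∈ S, ∀ δ₂ ∈ S, ∀ α, α ∈ C δ₁ → α ∈ C δ₂ → C δ₁ ∩ Set.Iio α = C δ₂ ∩ Set.Iio α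

/-- A partial order is `κ`-directed: every subset of cardinality `< κ` has an upper bound. -/
def KDirected (J : Type u) [PartialOrder J] (κ : Cardinal.{u}) : Prop :=
  ∀ s : Set J, #s < κ → ∃ ub : J, ∀ x ∈ s, x ≤ ub

/-- `f ≤_{I*} g` for elements of the product `∏_{i} Ji i`. -/
def prodLE {ι : Type 1} (Ji : ι → Type 1) [∀ i, PartialOrder (Ji i)]
    (Istar : Set (Set ι)) (f g : ∀ i, Ji i) : Prop :=
  {i | ¬ f i ≤ g i} ∈ Istar

/-- `f <_{I*} g` for elements of the product `∏_{i} Ji i`. -/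
def prodLT {ι : Type 1} (Ji : ι → Type 1) [∀ i, PartialOrder (Ji i)]
    (Istar : Set (Set ι)) (f g : ∀ i, Ji i) : Prop :=
  {i | ¬ f i < g i} ∈ Istar

/-- `E` is closed in `lam`. -/
def IsClosedIn (E : Set Ordinal) (lam : Ordinal) : Prop :=
  ∀ δ < lam, δ ≠ 0 → (∀ α < δ, ∃ β ∈ E, α < β ∧ β < δ) → δ ∈ E

/-- `E` is a club of `lam`. -/
def IsClubIn (E : Set Ordinal) (lam : Ordinal) : Prop :=
  (∀ β ∈ E, β < lam) ∧ (∀ α < lam, ∃ β ∈ E, α ≤ β) ∧ IsClosedIn E lam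

/-- `A` is stationary in `lam`. -/
def IsStationaryIn (A : Set Ordinal) (lam : Ordinal) : Prop :=
  ∀ E, IsClubIn E lam → (A ∩ E).Nonempty

/-- The set of `δ ∈ S` where the prediction by `t̄` fails for `f`. -/
def failSet {J : Type 1} [PartialOrder J] (S : Set Ordinal) (C : Ordinal → Set Ordinal)
    (t : Ordinal → J) (f : Ordinal → J) : Set Ordinal :=
  {δ ∈ S | ¬ ∀ α ∈ C δ, f α ≤ t δ}

/-- The ideal `I*_t̄`: sets covered by a union of fewer than `θ` failure sets. -/
def failIdeal {J : Type 1} [PartialOrder J] (S : Set Ordinal) (C : Ordinal → Set Ordinal)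
    (θ : Cardinal.{1}) (t : Ordinal → J) : Set (Set Ordinal) :=
  {A | A ⊆ S ∧ ∃ jstar < θ.ord, ∃ fj : Ordinal.{1} → Ordinal.{0} → J,
    A ⊆ ⋃ j ∈ Set.Iio jstar, failSet S C t (fj j)}


private lemma key_good {J : Type 1} [PartialOrder J]
    (S : Set Ordinal.{0}) (C : Ordinal.{0} → Set Ordinal.{0}) (I : Set (Set Ordinal.{0}))
    (hI : IsIdealOn I S)
    (θ : Cardinal.{1}) (hθ : θ.IsRegular) (hJdir : KDirected J θ)
    (t : Ordinal → J)
    (hwit : ∀ f : Ordinal → J, {δ ∈ S | ∀ α ∈ C δ, f α ≤ t δ} ∉ I) :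
    ∀ jstar < θ.ord, ∀ fj : Ordinal.{1} → Ordinal.{0} → J,
      ∃ δ ∈ S, ∀ j < jstar, ∀ α ∈ C δ, fj j α ≤ t δ := by
  intro jstar hjs fj
  set s : Ordinal.{0} → Set J := fun α =>
    Set.range (fun x : jstar.ToType => fj (((Ordinal.ToType.mk (o := jstar))).symm x : Ordinal) α)
    with hs
  have hslt : ∀ α, #(s α) < θ := by
    intro α
    refine lt_of_le_of_lt (Cardinal.mk_range_le) ?_
    rw [Cardinal.mk_toType]
    exact Cardinal.lt_ord.mp hjs
  choose g hg using fun α => hJdir (s α) (hslt α)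
  have hne : {δ ∈ S | ∀ α ∈ C δ, g α ≤ t δ}.Nonempty := by
    rcases Set.eq_empty_or_nonempty {δ ∈ S | ∀ α ∈ C δ, g α ≤ t δ} with h | h
    · exact absurd (h ▸ hI.empty_mem) (hwit g)
    · exact h
  obtain ⟨δ, hδS, hδ⟩ := hne
  refine ⟨δ, hδS, fun j hj α hα => ?_⟩
  have hmem : fj j α ∈ s α := by
    refine ⟨(Ordinal.ToType.mk (o := jstar)) ⟨j, hj⟩, ?_⟩
    simp
  exact le_trans (hg α _ hmem) (hδ α hα)

private lemma cover_mem {J : Type 1} [PartialOrder J]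
    (S : Set Ordinal.{0}) (C : Ordinal.{0} → Set Ordinal.{0})
    (θ : Cardinal.{1}) (t : Ordinal.{0} → J)
    {K : Type 1} (g : K → Ordinal.{0} → J) (hK : #K < θ)
    {A : Set Ordinal.{0}} (hA : A ⊆ S) (hcov : A ⊆ ⋃ k, failSet S C t (g k)) :
    A ∈ failIdeal S C θ t := by
  set jstar := (#K).ord with hjst
  have hjs : jstar < θ.ord := Cardinal.ord_lt_ord.mpr hK
  rcases isEmpty_or_nonempty K with hKe | hKn
  · refine ⟨hA, 0, lt_of_le_of_lt zero_le hjs, fun _ => t, ?_⟩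
    intro a ha
    exact absurd (hcov ha) (by simp)
  · have hcard : #jstar.ToType = #K := by rw [Cardinal.mk_toType, hjst, Cardinal.card_ord]
    obtain ⟨e⟩ : Nonempty (jstar.ToType ≃ K) := Cardinal.eq.mp hcard
    obtain ⟨k₀⟩ := hKn
    refine ⟨hA, jstar, hjs,
      fun j => if h : j < jstar then g (e ((Ordinal.ToType.mk (o := jstar)) ⟨j, h⟩)) else g k₀, ?_⟩
    intro a ha
    obtain ⟨k, hk⟩ := Set.mem_iUnion.mp (hcov ha)
    have hjlt : (((Ordinal.ToType.mk (o := jstar))).symm (e.symm k) : Ordinal) < jstar :=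
      (((Ordinal.ToType.mk (o := jstar))).symm (e.symm k)).2
    refine Set.mem_biUnion (Set.mem_Iio.mpr hjlt) ?_
    simp only [dif_pos hjlt, Subtype.coe_eta, OrderIso.apply_symm_apply,
      Equiv.apply_symm_apply]
    have heta : (⟨((Ordinal.ToType.mk (o := jstar)).symm (e.symm k) : Ordinal), hjlt⟩ : Set.Iio jstar)
        = (Ordinal.ToType.mk (o := jstar)).symm (e.symm k) := rfl
    simpa only [heta, OrderIso.apply_symm_apply, Equiv.apply_symm_apply] using hk

/-- If `I` is an ideal on `S`, `θ` is an infinite regular cardinal, `J` is a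
`θ`-directed partial order and `t̄` witnesses `OBB_J(C̄, I)`, then `I*_t̄` is a `θ`-complete
ideal on `S` (in particular `S ∉ I*_t̄`, i.e. any `< θ` many functions admit a common good
`δ ∈ S`), and `t̄` witnesses `OBB⁺_J(C̄, I*_t̄)`. -/
theorem stmt1 {J : Type 1} [PartialOrder J]
    (S : Set Ordinal) (C : Ordinal → Set Ordinal) (I : Set (Set Ordinal))
    (hI : IsIdealOn I S) (hC : ∀ δ ∈ S, C δ ⊆ Set.Iio δ)
    (θ : Cardinal.{1}) (hθ : θ.IsRegular)
    (hJdir : KDirected J θ)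
    (t : Ordinal → J)
    (hwit : ∀ f : Ordinal → J, {δ ∈ S | ∀ α ∈ C δ, f α ≤ t δ} ∉ I) :
    IsIdealOn (failIdeal S C θ t) S ∧
    IdealComplete (failIdeal S C θ t) θ ∧
    (∀ jstar < θ.ord, ∀ fj : Ordinal.{1} → Ordinal.{0} → J,
      ∃ δ ∈ S, ∀ j < jstar, ∀ α ∈ C δ, fj j α ≤ t δ) ∧
    (∀ f : Ordinal → J, S \ {δ ∈ S | ∀ α ∈ C δ, f α ≤ t δ} ∈ failIdeal S C θ t) := by

  have hkey := key_good S C I hI θ hθ hJdir t hwit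
  have haleph : ℵ₀ ≤ θ := hθ.aleph0_le
  have hord0 : (0 : Ordinal) < θ.ord := by
    have := Cardinal.ord_lt_ord.mpr hθ.pos
    simpa using this
  have hideal : IsIdealOn (failIdeal S C θ t) S := by
    constructor
    · exact fun A hA => hA.1
    · exact ⟨Set.empty_subset _, 0, hord0, fun _ => t, Set.empty_subset _⟩
    · rintro A ⟨hAS, jstar, hjs, fj, hcov⟩ B hBA
      exact ⟨hBA.trans hAS, jstar, hjs, fj, hBA.trans hcov⟩
    · rintro A ⟨hAS, j1, hj1, f1, hc1⟩ B ⟨hBS, j2, hj2, f2, hc2⟩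
      refine cover_mem S C θ t
        (Sum.elim (fun x : j1.ToType => f1 (((Ordinal.ToType.mk (o := j1))).symm x : Ordinal))
          (fun x : j2.ToType => f2 (((Ordinal.ToType.mk (o := j2))).symm x : Ordinal))) ?_
        (Set.union_subset hAS hBS) ?_
      · rw [Cardinal.mk_sum]
        simp only [Cardinal.lift_id, Cardinal.mk_toType]
        exact Cardinal.add_lt_of_lt haleph (Cardinal.lt_ord.mp hj1) (Cardinal.lt_ord.mp hj2)
      · rintro a (ha | ha)
        · obtain ⟨j, hj, hjf⟩ := Set.mem_iUnion₂.mp (hc1 ha)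
          refine Set.mem_iUnion.mpr ⟨Sum.inl ((Ordinal.ToType.mk (o := j1)) ⟨j, hj⟩), ?_⟩
          simpa using hjf
        · obtain ⟨j, hj, hjf⟩ := Set.mem_iUnion₂.mp (hc2 ha)
          refine Set.mem_iUnion.mpr ⟨Sum.inr ((Ordinal.ToType.mk (o := j2)) ⟨j, hj⟩), ?_⟩
          simpa using hjf
    · rintro ⟨hSS, jstar, hjs, fj, hcov⟩
      obtain ⟨δ, hδS, hδ⟩ := hkey jstar hjs fj
      obtain ⟨j, hj, hjf⟩ := Set.mem_iUnion₂.mp (hcov hδS)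
      exact hjf.2 (hδ j hj)
  refine ⟨hideal, ?_, hkey, ?_⟩
  · intro T hT hTcard
    choose hsub js hjs fjs hcovs using fun (A : T) => hT A.2
    refine cover_mem S C θ t
      (fun k : Σ A : T, (js A).ToType =>
        fjs k.1 (((Ordinal.ToType.mk (o := (js k.1)))).symm k.2 : Ordinal)) ?_ ?_ ?_
    · rw [Cardinal.mk_sigma]
      refine Cardinal.sum_lt_of_isRegular hθ hTcard ?_
      intro A
      rw [Cardinal.mk_toType]
      exact Cardinal.lt_ord.mp (hjs A)
    · intro a ha
      obtain ⟨A, hAT, haA⟩ := ha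
      exact hsub ⟨A, hAT⟩ haA
    · intro a ha
      obtain ⟨A, hAT, haA⟩ := ha
      obtain ⟨j, hj, hjf⟩ := Set.mem_iUnion₂.mp (hcovs ⟨A, hAT⟩ haA)
      refine Set.mem_iUnion.mpr ⟨⟨⟨A, hAT⟩, (Ordinal.ToType.mk (o := (js ⟨A, hAT⟩))) ⟨j, hj⟩⟩, ?_⟩
      simpa using hjf
  · intro f
    have h1 : (1 : Ordinal) < θ.ord := by
      refine lt_of_lt_of_le Ordinal.one_lt_omega0 ?_
      rw [← Cardinal.ord_aleph0]
      exact Cardinal.ord_le_ord.mpr haleph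
    refine ⟨Set.diff_subset, 1, h1, fun _ => f, ?_⟩
    intro δ hδ
    refine Set.mem_biUnion (Set.mem_Iio.mpr zero_lt_one) ⟨hδ.1, ?_⟩
    intro hall
    exact hδ.2 ⟨hδ.1, hall⟩
end

section
/- Assume: (a) OBB_J(C̄, I) holds, where I is an ideal on S and otp(C_δ) ≤ κ for every δ ∈ S; (b) I is |i*|⁺-complete; (c) ⟨J_i : i < i*⟩ is a sequence of partial orders, each satisfying (∀s)(∃t)(s < t); (d) I* is a κ⁺-complete ideal on i*; (e) J is a partial order and ḡ = ⟨g_t : t ∈ J⟩, with g_t ∈ ∏_{i<i*} J_i, is such that {g_t : t ∈ J} is cofinal in (∏_{i<i*} J_i, ≤_{I*}) and s ≤_J t implies g_s ≤_{I*} g_t. Then {i < i* : OBB_{J_i}(C̄, I)} = i* mod I*. -/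
open Set Cardinal

universe u v

/-- Pos (A) of the main lemma. Under (a)–(e), with `I*` a `κ⁺`-complete
ideal on `i*`, the set `{i < i* : OBB_{J_i}(C̄, I)}` equals `i*` mod `I*`. -/
theorem stmt3 {ι : Type 1} {J : Type 1} [PartialOrder J]
    (Ji : ι → Type 1) [∀ i, PartialOrder (Ji i)]
    (S : Set Ordinal) (C : Ordinal → Set Ordinal)
    (I : Set (Set Ordinal)) (Istar : Set (Set ι)) (κ : Cardinal.{1})
    -- (a)
    (hOBB : OBB J S C I) (hI : IsIdealOn I S) (hC : ∀ δ ∈ S, C δ ⊆ Set.Iio δ)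
    (hotp : ∀ δ ∈ S, otp (C δ) ≤ κ.ord)
    -- (b) `I` is `|i*|⁺`-complete
    (hIcomp : IdealComplete I (Order.succ #ι))
    -- (c)
    (hJi : ∀ i, ∀ s : Ji i, ∃ t : Ji i, s < t)
    -- (d) `I*` is a `κ⁺`-complete ideal on `i*`
    (hIstar : IsIdeal Istar)
    (hIstarComp : IdealComplete Istar (Order.succ κ))
    -- (e)
    (g : J → ∀ i, Ji i)
    (hcof : ∀ f : ∀ i, Ji i, ∃ t : J, prodLE Ji Istar f (g t))
    (hmono : ∀ s t : J, s ≤ t → prodLE Ji Istar (g s) (g t)) :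
    {i | ¬ OBB (Ji i) S C I} ∈ Istar := by
  classical
  by_contra hB
  obtain ⟨tJ, htJ⟩ := hOBB
  set B : Set ι := {i | ¬ OBB (Ji i) S C I} with hBdef
  have hfail : ∀ i ∈ B, ∃ fi : Ordinal → Ji i,
      {δ ∈ S | ∀ α ∈ C δ, fi α ≤ g (tJ δ) i} ∈ I := by
    intro i hi
    by_contra h
    push_neg at h
    exact hi ⟨fun δ => g (tJ δ) i, h⟩
  choose fi hfi using hfail
  let f : Ordinal → ∀ i, Ji i := fun α i => if h : i ∈ B then fi i h α else g (tJ 0) i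
  choose hfun hN using fun α => hcof (f α)
  have hD := htJ hfun
  let A : ι → Set Ordinal := fun i =>
    if h : i ∈ B then {δ ∈ S | ∀ α ∈ C δ, fi i h α ≤ g (tJ δ) i} else ∅
  have hAI : ∀ i, A i ∈ I := by
    intro i
    by_cases h : i ∈ B
    · simpa [A, h] using hfi i h
    · simpa [A, h] using hI.empty_mem
  have hcard : ∀ δ ∈ S, #(C δ) ≤ κ := by
    intro δ hδ
    have := Ordinal.card_le_card (hotp δ hδ)
    rwa [otp, Ordinal.card_type, Cardinal.card_ord] at this
  have hcover : {δ ∈ S | ∀ α ∈ C δ, hfun α ≤ tJ δ} ⊆ ⋃ i, A i := by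
    intro δ hδ
    obtain ⟨hδS, hδle⟩ := hδ
    set N : Ordinal → Set ι := fun α =>
      {i | ¬ f α i ≤ g (hfun α) i} ∪ {i | ¬ g (hfun α) i ≤ g (tJ δ) i} with hNdef
    have hNmem : ∀ α ∈ C δ, N α ∈ Istar := by
      intro α hα
      exact hIstar.union_mem _ (hN α) _ (hmono _ _ (hδle α hα))
    have hE : ⋃₀ (N '' C δ) ∈ Istar := by
      apply hIstarComp
      · rintro _ ⟨α, hα, rfl⟩; exact hNmem α hα
      · calc #(N '' C δ) ≤ #(C δ) := Cardinal.mk_image_le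
          _ ≤ κ := hcard δ hδS
          _ < Order.succ κ := Order.lt_succ κ
    have hne : (B \ ⋃₀ (N '' C δ)).Nonempty := by
      rw [Set.nonempty_iff_ne_empty]
      intro hemp
      apply hB
      have hsub : B ⊆ ⋃₀ (N '' C δ) := by
        intro i hi
        by_contra hni
        exact (Set.eq_empty_iff_forall_notMem.mp hemp i) ⟨hi, hni⟩
      exact hIstar.mono _ hE _ hsub
    obtain ⟨i, hiB, hiE⟩ := hne
    refine Set.mem_iUnion.mpr ⟨i, ?_⟩
    have hmemA : δ ∈ {δ ∈ S | ∀ α ∈ C δ, fi i hiB α ≤ g (tJ δ) i} := by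
      refine ⟨hδS, fun α hα => ?_⟩
      have hiN : i ∉ N α := fun h => hiE ⟨N α, ⟨α, hα, rfl⟩, h⟩
      have h1 : f α i ≤ g (hfun α) i := by
        by_contra h; exact hiN (Or.inl h)
      have h2 : g (hfun α) i ≤ g (tJ δ) i := by
        by_contra h; exact hiN (Or.inr h)
      have hfe : f α i = fi i hiB α := by simp [f, hiB]
      calc fi i hiB α = f α i := hfe.symm
        _ ≤ g (hfun α) i := h1
        _ ≤ g (tJ δ) i := h2
    simpa [A, hiB] using hmemA
  apply hD
  have hUnion : ⋃ i, A i ∈ I := by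
    have hrg : ⋃ i, A i = ⋃₀ Set.range A := by rw [Set.sUnion_range]
    rw [hrg]
    apply hIcomp
    · rintro _ ⟨i, rfl⟩; exact hAI i
    · calc #(Set.range A) ≤ #ι := Cardinal.mk_range_le
        _ < Order.succ #ι := Order.lt_succ _
  exact hI.mono _ hUnion _ hcover
end

section
/- Assume: (a) OBB_J(C̄, I) holds, where I is an ideal on S, otp(C_δ) = κ for every δ ∈ S, and C̄ is tree-like; (b) I is |i*|⁺-complete; (c) ⟨J_i : i < i*⟩ is a sequence of partial orders, each satisfying (∀s)(∃t)(s < t) and each κ-directed; (d) I* is an ideal on i* such that for every ⊆-increasing sequence ⟨U_ε : ε < κ⟩ of members of I*, the set i* ∖ ∪_{ε<κ} U_ε does not belong to I*; (e) J is a partial order and ḡ = ⟨g_t : t ∈ J⟩, with g_t ∈ ∏_{i<i*} J_i, is such that {g_t : t ∈ J} is cofinal in (∏_{i<i*} J_i, ≤_{I*}) and s ≤_J t implies g_s ≤_{I*} g_t. Then {i < i* : OBB_{J_i}(C̄, I)} ∈ I*⁺. -/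
open Set Cardinal

universe u v

lemma ideal_biUnion_finite {ι : Type u} {γ : Type v} {Istar : Set (Set ι)} (hI : IsIdeal Istar)
    {s : Set γ} (hs : s.Finite) (W : γ → Set ι) :
    (∀ x ∈ s, W x ∈ Istar) → (⋃ x ∈ s, W x) ∈ Istar := by
  refine Set.Finite.induction_on (motive := fun s _ => (∀ x ∈ s, W x ∈ Istar) → (⋃ x ∈ s, W x) ∈ Istar) s hs ?_ ?_
  · intro _; simpa using hI.empty_mem
  · intro a s _ _ ih hW
    rw [Set.biUnion_insert]
    exact hI.union_mem _ (hW a (Set.mem_insert _ _)) _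
      (ih fun x hx => hW x (Set.mem_insert_of_mem _ hx))

lemma card_initialSeg_lt {Cs : Set Ordinal.{0}} {κ : Cardinal.{1}}
    (hr : Ordinal.type (Subrel ((· < ·) : Ordinal → Ordinal → Prop) (· ∈ Cs)) = κ.ord)
    {α : Ordinal} (hα : α ∈ Cs) : #(↥(Cs ∩ Set.Iio α)) < κ := by
  set r := Subrel ((· < ·) : Ordinal → Ordinal → Prop) (· ∈ Cs) with hrdef
  have e : ↥(Cs ∩ Set.Iio α) ≃ {y : ↥Cs // r y ⟨α, hα⟩} :=
    ⟨fun x => ⟨⟨x.1, x.2.1⟩, x.2.2⟩, fun y => ⟨y.1.1, y.1.2, y.2⟩,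
      fun _ => rfl, fun _ => rfl⟩
  rw [Cardinal.mk_congr e, ← Ordinal.card_typein]
  exact Cardinal.lt_ord.mp (hr ▸ Ordinal.typein_lt_type r ⟨α, hα⟩)

/-- Pos (B) of the main lemma. Under (a)–(c) with `C̄` tree-like of
order type `κ` and each `J_i` `κ`-directed, and (d): `I*` an ideal on `i*` such that the
complement of the union of any `⊆`-increasing `κ`-sequence of members of `I*` is
`I*`-positive, and (e), the set `{i < i* : OBB_{J_i}(C̄, I)}` is `I*`-positive. -/
theorem stmt4 {ι : Type 1} {J : Type 1} [PartialOrder J]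
    (Ji : ι → Type 1) [∀ i, PartialOrder (Ji i)]
    (S : Set Ordinal) (C : Ordinal → Set Ordinal)
    (I : Set (Set Ordinal)) (Istar : Set (Set ι)) (κ : Cardinal.{1})
    -- (a)
    (hOBB : OBB J S C I) (hI : IsIdealOn I S) (hC : ∀ δ ∈ S, C δ ⊆ Set.Iio δ)
    (hotp : ∀ δ ∈ S, otp (C δ) = κ.ord) (htree : TreeLike S C)
    -- (b) `I` is `|i*|⁺`-complete
    (hIcomp : IdealComplete I (Order.succ #ι))
    -- (c)
    (hJi : ∀ i, ∀ s : Ji i, ∃ t : Ji i, s < t)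
    (hJidir : ∀ i, KDirected (Ji i) κ)
    -- (d)
    (hIstar : IsIdeal Istar)
    (hIstarChain : ∀ U : Ordinal.{1} → Set ι,
      (∀ ε < κ.ord, U ε ∈ Istar) →
      (∀ ε₁ ε₂, ε₁ ≤ ε₂ → ε₂ < κ.ord → U ε₁ ⊆ U ε₂) →
      (⋃ ε ∈ Set.Iio κ.ord, U ε)ᶜ ∉ Istar)
    -- (e)
    (g : J → ∀ i, Ji i)
    (hcof : ∀ f : ∀ i, Ji i, ∃ t : J, prodLE Ji Istar f (g t))
    (hmono : ∀ s t : J, s ≤ t → prodLE Ji Istar (g s) (g t)) :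
    {i | OBB (Ji i) S C I} ∉ Istar := by
  classical
  intro hA
  obtain ⟨t, ht⟩ := hOBB
  -- choose failure functions for each coordinate where OBB fails
  have hfail : ∀ i : ι, ∃ fi : Ordinal.{0} → Ji i,
      ¬ OBB (Ji i) S C I → {δ ∈ S | ∀ α ∈ C δ, fi α ≤ g (t δ) i} ∈ I := by
    intro i
    by_cases hi : OBB (Ji i) S C I
    · exact ⟨fun _ => g (t 0) i, fun h => absurd hi h⟩
    · have hi' := hi
      rw [OBB] at hi'
      push_neg at hi'
      obtain ⟨fi, hfi⟩ := hi' (fun δ => g (t δ) i)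
      exact ⟨fi, fun _ => hfi⟩
  choose f hf using hfail
  -- choose pointwise dominating elements
  have hex : ∀ (α : Ordinal.{0}) (i : ι), ∃ u : Ji i,
      f i α ≤ u ∧ (ℵ₀ ≤ κ → ∀ δ' ∈ S, α ∈ C δ' → ∀ β ∈ C δ', β < α → f i β ≤ u) := by
    intro α i
    by_cases hκ : ℵ₀ ≤ κ
    · by_cases hα : ∃ δ' ∈ S, α ∈ C δ'
      · obtain ⟨δ₀, hδ₀S, hδ₀⟩ := hα
        have hcard : #(f i '' ((C δ₀ ∩ Set.Iio α) ∪ {α})) < κ := by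
          refine lt_of_le_of_lt Cardinal.mk_image_le ?_
          refine lt_of_le_of_lt (Cardinal.mk_union_le _ _) ?_
          rw [Cardinal.mk_singleton]
          exact Cardinal.add_lt_of_lt hκ (card_initialSeg_lt (hotp δ₀ hδ₀S) hδ₀)
            (lt_of_lt_of_le Cardinal.one_lt_aleph0 hκ)
        obtain ⟨u, hu⟩ := hJidir i _ hcard
        refine ⟨u, hu _ ⟨α, Or.inr rfl, rfl⟩, fun _ δ' hδ'S hαδ' β hβ hβα => ?_⟩
        have hEq := htree δ' hδ'S δ₀ hδ₀S α hαδ' hδ₀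
        have hβ' : β ∈ C δ₀ ∩ Set.Iio α := hEq ▸ (⟨hβ, hβα⟩ : β ∈ C δ' ∩ Set.Iio α)
        exact hu _ ⟨β, Or.inl hβ', rfl⟩
      · exact ⟨f i α, le_refl _, fun _ δ' hδ'S hαδ' => absurd ⟨δ', hδ'S, hαδ'⟩ hα⟩
    · exact ⟨f i α, le_refl _, fun h => absurd h hκ⟩
  choose F hF1 hF2 using hex
  -- choose the covering indices
  have hhx : ∀ α : Ordinal.{0}, ∃ s : J, prodLE Ji Istar (F α) (g s) := fun α => hcof (F α)
  choose h hh using hhx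
  have hB : {δ ∈ S | ∀ α ∈ C δ, h α ≤ t δ} ∉ I := ht h
  set Bset : ι → Set Ordinal := fun i => {δ ∈ S | ∀ α ∈ C δ, f i α ≤ g (t δ) i} with hBsetdef
  set A : Set ι := {i | OBB (Ji i) S C I} with hAdef
  have hT : ⋃₀ (Bset '' Aᶜ) ∈ I := by
    apply hIcomp
    · rintro _ ⟨i, hi, rfl⟩; exact hf i hi
    · refine lt_of_le_of_lt (le_trans Cardinal.mk_image_le (Cardinal.mk_subtype_le _)) ?_
      exact Order.lt_succ _
  have hnotsub : ¬ ({δ ∈ S | ∀ α ∈ C δ, h α ≤ t δ} ⊆ ⋃₀ (Bset '' Aᶜ)) :=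
    fun hsub => hB (hI.mono _ hT _ hsub)
  obtain ⟨δ, hδB, hδT⟩ := Set.not_subset.mp hnotsub
  obtain ⟨hδS, hδh⟩ := hδB
  set r := Subrel ((· < ·) : Ordinal → Ordinal → Prop) (· ∈ C δ) with hrdef
  have hr : Ordinal.type r = κ.ord := hotp δ hδS
  have hX : ∀ α ∈ C δ, {i | ¬ F α i ≤ g (t δ) i} ∈ Istar := by
    intro α hα
    have h1 : {i | ¬ F α i ≤ g (h α) i} ∈ Istar := hh α
    have h2 : {i | ¬ g (h α) i ≤ g (t δ) i} ∈ Istar := hmono _ _ (hδh α hα)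
    refine hIstar.mono _ (hIstar.union_mem _ h1 _ h2) _ ?_
    intro i hi
    by_contra hc
    simp only [Set.mem_union, Set.mem_setOf_eq, not_or, not_not] at hc
    exact hi (le_trans hc.1 hc.2)
  set U : Ordinal.{1} → Set ι := fun ε =>
    A ∪ {i | ∃ a : ↥(C δ), Ordinal.typein r a ≤ ε ∧ ¬ f i ↑a ≤ g (t δ) i} with hUdef
  have hUmem : ∀ ε < κ.ord, U ε ∈ Istar := by
    intro ε hε
    by_cases hκ : ℵ₀ ≤ κ
    · obtain ⟨a', ha'⟩ := Ordinal.typein_surj r (hr ▸ hε)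
      refine hIstar.mono _ (hIstar.union_mem _ hA _ (hX (↑a') a'.2)) _ ?_
      rintro i (hiA | ⟨a, hale, hnot⟩)
      · exact Or.inl hiA
      · refine Or.inr (fun hle => ?_)
        rcases trichotomous_of r a a' with hlt | heq | hgt
        · exact hnot (le_trans (hF2 (↑a') i hκ δ hδS a'.2 (↑a) a.2 hlt) hle)
        · exact hnot (by rw [heq]; exact le_trans (hF1 (↑a') i) hle)
        · have : Ordinal.typein r a' < Ordinal.typein r a :=
            (Ordinal.typein_lt_typein r).mpr hgt
          rw [ha'] at this
          exact absurd hale (not_le.mpr this)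
    · have hfin : Finite ↥(C δ) := by
        rw [← Cardinal.mk_lt_aleph0_iff]
        have hcdk : #(↥(C δ)) = κ := by
          rw [← Ordinal.card_type r, hr, Cardinal.card_ord]
        rw [hcdk]
        exact not_le.mp hκ
      haveI := hfin
      have hUn : (⋃ α ∈ C δ, {i | ¬ F α i ≤ g (t δ) i}) ∈ Istar :=
        ideal_biUnion_finite hIstar (C δ).toFinite _ (fun α hα => hX α hα)
      refine hIstar.mono _ (hIstar.union_mem _ hA _ hUn) _ ?_
      rintro i (hiA | ⟨a, _, hnot⟩)
      · exact Or.inl hiA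
      · exact Or.inr (Set.mem_biUnion a.2 (fun hle => hnot (le_trans (hF1 (↑a) i) hle)))
  have hUmono : ∀ ε₁ ε₂, ε₁ ≤ ε₂ → ε₂ < κ.ord → U ε₁ ⊆ U ε₂ := by
    rintro ε₁ ε₂ h12 _ i (hiA | ⟨a, hale, hnot⟩)
    · exact Or.inl hiA
    · exact Or.inr ⟨a, hale.trans h12, hnot⟩
  have hcompl := hIstarChain U hUmem hUmono
  have hnsub : ¬ ((⋃ ε ∈ Set.Iio κ.ord, U ε)ᶜ ⊆ A) :=
    fun hsub => hcompl (hIstar.mono _ hA _ hsub)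
  obtain ⟨i, hic, hiA⟩ := Set.not_subset.mp hnsub
  have hδBi : δ ∈ Bset i := by
    refine ⟨hδS, fun α hα => ?_⟩
    have hε : Ordinal.typein r ⟨α, hα⟩ < κ.ord := hr ▸ Ordinal.typein_lt_type r ⟨α, hα⟩
    have hiU : i ∉ U (Ordinal.typein r ⟨α, hα⟩) := fun hmem =>
      hic (Set.mem_biUnion hε hmem)
    by_contra hcon
    exact hiU (Or.inr ⟨⟨α, hα⟩, le_refl _, hcon⟩)
  exact hδT ⟨Bset i, ⟨i, hiA, rfl⟩, hδBi⟩
end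

section
/- Assume: (a) OBB_J(C̄, I) holds, where I is an ideal on S and otp(C_δ) ≤ κ for every δ ∈ S; (b) I is |i*|⁺-complete; (c) ⟨J_i : i < i*⟩ is a sequence of partial orders, each satisfying (∀s)(∃t)(s < t); (d) I* is an ideal on i*; (e) J is a partial order and ḡ = ⟨g_t : t ∈ J⟩, with g_t ∈ ∏_{i<i*} J_i, is such that {g_t : t ∈ J} is cofinal in (∏_{i<i*} J_i, ≤_{I*}) and s ≤_J t implies g_s ≤_{I*} g_t; (f) there is a function F : ∏_{i<i*} J_i → J such that f ≤_{I*} g_{F(f)} for every f ∈ ∏_{i<i*} J_i, and such that whenever f_ε ∈ ∏_{i<i*} J_i (for ε < κ) and t ∈ J satisfy F(f_ε) ≤_J t for all ε < κ, then {i < i* : f_ε(i) ≤_{J_i} g_t(i) for every ε < κ} ∈ I*⁺. Then {i < i* : OBB_{J_i}(C̄, I)} ∈ I*⁺. -/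
open Set Cardinal

universe u v

/-- Pos (C) of the main lemma. Under (a)–(e) together with (f): a choice
function `F` into `J` dominating each product element, such that whenever `κ` many products
have their `F`-values below `t`, positively many coordinates are dominated by `g_t`;
then `{i < i* : OBB_{J_i}(C̄, I)}` is `I*`-positive. -/
theorem stmt5 {ι : Type 1} {J : Type 1} [PartialOrder J]
    (Ji : ι → Type 1) [∀ i, PartialOrder (Ji i)]
    (S : Set Ordinal) (C : Ordinal → Set Ordinal)
    (I : Set (Set Ordinal)) (Istar : Set (Set ι)) (κ : Cardinal.{1})
    -- (a)
    (hOBB : OBB J S C I) (hI : IsIdealOn I S) (hC : ∀ δ ∈ S, C δ ⊆ Set.Iio δ)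
    (hotp : ∀ δ ∈ S, otp (C δ) ≤ κ.ord)
    -- (b) `I` is `|i*|⁺`-complete
    (hIcomp : IdealComplete I (Order.succ #ι))
    -- (c)
    (hJi : ∀ i, ∀ s : Ji i, ∃ t : Ji i, s < t)
    -- (d)
    (hIstar : IsIdeal Istar)
    -- (e)
    (g : J → ∀ i, Ji i)
    (hcof : ∀ f : ∀ i, Ji i, ∃ t : J, prodLE Ji Istar f (g t))
    (hmono : ∀ s t : J, s ≤ t → prodLE Ji Istar (g s) (g t))
    -- (f)
    (F : (∀ i, Ji i) → J)
    (hF : ∀ f : ∀ i, Ji i, prodLE Ji Istar f (g (F f)))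
    (hFbound : ∀ fs : Ordinal.{1} → ∀ i, Ji i, ∀ t : J,
      (∀ ε < κ.ord, F (fs ε) ≤ t) →
      {i | ∀ ε < κ.ord, fs ε i ≤ g t i} ∉ Istar) :
    {i | OBB (Ji i) S C I} ∉ Istar := by
  classical
  intro hpos
  -- witnesses from OBB_J
  obtain ⟨tt, htt⟩ := hOBB
  -- for each i, choose a counterexample function if OBB fails at i
  have key : ∀ i, ∃ fi : Ordinal → Ji i, ¬ OBB (Ji i) S C I →
      {δ ∈ S | ∀ α ∈ C δ, fi α ≤ g (tt δ) i} ∈ I := by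
    intro i
    by_cases hi : OBB (Ji i) S C I
    · exact ⟨fun _ => g (tt 0) i, fun h => absurd hi h⟩
    · have : ¬ ∀ f : Ordinal → Ji i,
          {δ ∈ S | ∀ α ∈ C δ, f α ≤ g (tt δ) i} ∉ I := by
        intro hall
        exact hi ⟨fun δ => g (tt δ) i, hall⟩
      push_neg at this
      obtain ⟨fi, hfi⟩ := this
      exact ⟨fi, fun _ => hfi⟩
  choose fI hfI using key
  set B : Set ι := {i | ¬ OBB (Ji i) S C I} with hB
  set Wi : ι → Set Ordinal := fun i => {δ ∈ S | ∀ α ∈ C δ, fI i α ≤ g (tt δ) i} with hWi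
  -- union of the bad sets is in I by completeness
  set U : Set Ordinal := ⋃₀ ((fun i => Wi i) '' B) with hU
  have hUI : U ∈ I := by
    apply hIcomp
    · rintro _ ⟨i, hiB, rfl⟩
      exact hfI i hiB
    · calc #((fun i => Wi i) '' B) ≤ #B := Cardinal.mk_image_le
        _ ≤ #ι := Cardinal.mk_set_le B
        _ < Order.succ #ι := Order.lt_succ _
  -- B is nonempty
  have hBne : B.Nonempty := by
    rcases Set.eq_empty_or_nonempty B with h | h
    · exfalso
      apply hIstar.univ_not_mem
      have : {i | OBB (Ji i) S C I} = Set.univ := by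
        ext i; simp only [Set.mem_setOf_eq, Set.mem_univ, iff_true]
        by_contra hi
        exact absurd (Set.eq_empty_iff_forall_notMem.mp h i) (by exact fun h' => h' hi)
      rwa [this] at hpos
    · exact h
  obtain ⟨i₀, hi₀⟩ := hBne
  -- the product functions and the composed function into J
  set hfun : Ordinal → ∀ i, Ji i := fun α i => fI i α with hhfun
  have hW := htt (fun α => F (hfun α))
  -- pick δ in the good set but outside U
  have hex : ∃ δ, δ ∈ {δ ∈ S | ∀ α ∈ C δ, F (hfun α) ≤ tt δ} ∧ δ ∉ U := by
    by_contra hcon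
    push_neg at hcon
    exact hW (hI.mono U hUI _ hcon)
  obtain ⟨δ, hδW, hδU⟩ := hex
  obtain ⟨hδS, hδdom⟩ := hδW
  have hδWi : ∀ i ∈ B, δ ∉ Wi i := by
    intro i hi hmem
    exact hδU ⟨Wi i, ⟨i, hi, rfl⟩, hmem⟩
  -- C δ is nonempty
  have hCne : ∃ α₀, α₀ ∈ C δ := by
    by_contra hcon
    push_neg at hcon
    exact hδWi i₀ hi₀ ⟨hδS, fun α hα => absurd hα (hcon α)⟩
  obtain ⟨α₀, hα₀⟩ := hCne
  -- enumerate C δ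
  set r := Subrel ((· < ·) : Ordinal.{0} → Ordinal.{0} → Prop) (· ∈ C δ) with hr
  have hotpδ : Ordinal.type r ≤ κ.ord := hotp δ hδS
  set fs : Ordinal.{1} → ∀ i, Ji i := fun ε =>
    if hε : ε < Ordinal.type r then hfun ((Ordinal.enum r ⟨ε, hε⟩ : ↥(C δ)) : Ordinal)
    else hfun α₀ with hfs
  have hfsC : ∀ ε, ∃ α ∈ C δ, fs ε = hfun α := by
    intro ε
    by_cases hε : ε < Ordinal.type r
    · refine ⟨_, (Ordinal.enum r ⟨ε, hε⟩).2, ?_⟩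
      simp only [hfs, dif_pos hε]
    · exact ⟨α₀, hα₀, by simp only [hfs, dif_neg hε]⟩
  have hPpos := hFbound fs (tt δ) ?bound
  case bound =>
    intro ε _
    obtain ⟨α, hα, hfsε⟩ := hfsC ε
    rw [hfsε]
    exact hδdom α hα
  -- find a bad coordinate in the positive set
  have hexi : ∃ i, (∀ ε < κ.ord, fs ε i ≤ g (tt δ) i) ∧ i ∈ B := by
    by_contra hcon
    push_neg at hcon
    apply hPpos
    apply hIstar.mono _ hpos
    intro i hi
    by_contra hOi
    exact (hcon i hi) hOi
  obtain ⟨i, hiP, hiB⟩ := hexi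
  -- δ ∈ Wi i, contradiction
  apply hδWi i hiB
  refine ⟨hδS, fun α hα => ?_⟩
  have hlt : Ordinal.typein r ⟨α, hα⟩ < Ordinal.type r := Ordinal.typein_lt_type r _
  have := hiP (Ordinal.typein r ⟨α, hα⟩) (lt_of_lt_of_le hlt hotpδ)
  have hfseq : fs (Ordinal.typein r ⟨α, hα⟩) = hfun α := by
    simp only [hfs, dif_pos hlt]
    congr 1
    have : Ordinal.enum r ⟨Ordinal.typein r ⟨α, hα⟩, hlt⟩ = ⟨α, hα⟩ :=
      Ordinal.enum_typein r ⟨α, hα⟩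
    rw [this]
  rw [hfseq] at this
  exact this
end

section
/- Assume: (a) OBB_J(C̄, I) holds, where I is an ideal on S, otp(C_δ) = κ for every δ ∈ S, and C̄ is tree-like; (b) I is |i*|⁺-complete; (c) ⟨J_i : i < i*⟩ is a sequence of partial orders, each satisfying (∀s)(∃t)(s < t); (d) I* is an ideal on i*; (e) J is a partial order and ḡ = ⟨g_t : t ∈ J⟩, with g_t ∈ ∏_{i<i*} J_i, is such that {g_t : t ∈ J} is cofinal in (∏_{i<i*} J_i, ≤_{I*}) and s ≤_J t implies g_s ≤_{I*} g_t; (f) for each ε < κ there is a function F_ε from (ε+1)-sequences of elements of ∏_{i<i*} J_i to J such that: for every ζ < κ and every sequence ⟨f_ε : ε ≤ ζ⟩ of elements of ∏_{i<i*} J_i we have f_ζ ≤_{I*} g_{F_ζ(⟨f_ε : ε ≤ ζ⟩)}, and whenever f_ζ ∈ ∏_{i<i*} J_i (for ζ < κ) and t ∈ J satisfy F_ζ(⟨f_ε : ε ≤ ζ⟩) ≤_J t for all ζ < κ, then {i < i* : (∀ε < κ) f_ε(i) ≤_{J_i} g_t(i)} ∈ I*⁺. Then {i < i* : OBB_{J_i}(C̄,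 I)} ∈ I*⁺. -/
open Set Cardinal

universe u v

lemma stmt7_otp_typein {s : Set Ordinal.{0}} {α : Ordinal.{0}} (h : α ∈ s) :
    otp (s ∩ Set.Iio α) = Ordinal.typein (Subrel ((· < ·) : Ordinal.{0} → Ordinal.{0} → Prop) (· ∈ s)) ⟨α, h⟩ := by
  rw [← Ordinal.type_subrel]
  exact Ordinal.type_eq.2 ⟨⟨⟨fun b => ⟨⟨b.1, b.2.1⟩, b.2.2⟩, fun b => ⟨b.1.1, b.1.2, b.2⟩,
    fun b => rfl, fun b => rfl⟩, Iff.rfl⟩⟩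

lemma stmt7_enum_eq {S : Set Ordinal.{0}} {C : Ordinal.{0} → Set Ordinal.{0}}
    (htree : TreeLike S C) {δ₁ δ₂ α : Ordinal.{0}} (hδ₁ : δ₁ ∈ S) (hδ₂ : δ₂ ∈ S)
    (hα₁ : α ∈ C δ₁) (hα₂ : α ∈ C δ₂) {ε : Ordinal.{1}}
    (hε : ε ≤ otp (C δ₁ ∩ Set.Iio α))
    (h₁ : ε < Ordinal.type (Subrel ((· < ·) : Ordinal.{0} → Ordinal.{0} → Prop) (· ∈ C δ₁)))
    (h₂ : ε < Ordinal.type (Subrel ((· < ·) : Ordinal.{0} → Ordinal.{0} → Prop) (· ∈ C δ₂))) :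
    (Ordinal.enum (Subrel ((· < ·) : Ordinal.{0} → Ordinal.{0} → Prop) (· ∈ C δ₁)) ⟨ε, h₁⟩).1 =
    (Ordinal.enum (Subrel ((· < ·) : Ordinal.{0} → Ordinal.{0} → Prop) (· ∈ C δ₂)) ⟨ε, h₂⟩).1 := by
  set b := Ordinal.enum (Subrel ((· < ·) : Ordinal.{0} → Ordinal.{0} → Prop) (· ∈ C δ₁)) ⟨ε, h₁⟩ with hb
  have hty : Ordinal.typein (Subrel ((· < ·) : Ordinal.{0} → Ordinal.{0} → Prop) (· ∈ C δ₁)) b = ε := by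
    rw [hb]; exact Ordinal.typein_enum _ _
  have hble : b.1 ≤ α := by
    by_contra hgt
    push_neg at hgt
    have hlt : Ordinal.typein (Subrel ((· < ·) : Ordinal.{0} → Ordinal.{0} → Prop) (· ∈ C δ₁)) ⟨α, hα₁⟩ <
        Ordinal.typein (Subrel ((· < ·) : Ordinal.{0} → Ordinal.{0} → Prop) (· ∈ C δ₁)) b :=
      (Ordinal.typein_lt_typein _).2 hgt
    rw [hty] at hlt
    exact lt_irrefl ε
      (lt_of_le_of_lt (le_trans hε (le_of_eq (stmt7_otp_typein hα₁))) hlt)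
  have hmem : ∃ hb2 : b.1 ∈ C δ₂,
      Ordinal.typein (Subrel ((· < ·) : Ordinal.{0} → Ordinal.{0} → Prop) (· ∈ C δ₂)) ⟨b.1, hb2⟩ = ε := by
    rcases lt_or_eq_of_le hble with hlt | heq
    · have hb2 : b.1 ∈ C δ₂ := by
        have h := htree δ₁ hδ₁ δ₂ hδ₂ α hα₁ hα₂
        have hx : b.1 ∈ C δ₁ ∩ Set.Iio α := ⟨b.2, hlt⟩
        rw [h] at hx
        exact hx.1
      refine ⟨hb2, ?_⟩
      rw [← stmt7_otp_typein hb2, ← htree δ₁ hδ₁ δ₂ hδ₂ b.1 b.2 hb2,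
        stmt7_otp_typein b.2]
      exact hty
    · have hb2 : b.1 ∈ C δ₂ := by rw [heq]; exact hα₂
      refine ⟨hb2, ?_⟩
      rw [← stmt7_otp_typein hb2, heq, ← htree δ₁ hδ₁ δ₂ hδ₂ α hα₁ hα₂,
        stmt7_otp_typein hα₁, ← hty]
      exact congrArg _ (Subtype.ext heq.symm)
  obtain ⟨hb2, hty2⟩ := hmem
  have henum : Ordinal.enum (Subrel ((· < ·) : Ordinal.{0} → Ordinal.{0} → Prop) (· ∈ C δ₂)) ⟨ε, h₂⟩ = ⟨b.1, hb2⟩ := by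
    apply Ordinal.typein_injective (Subrel ((· < ·) : Ordinal.{0} → Ordinal.{0} → Prop) (· ∈ C δ₂))
    rw [Ordinal.typein_enum, hty2]
  rw [henum]

/-- Pos (E) of the main lemma. Under (a)–(e), with `C̄` tree-like of order
type `κ`, and (f): functions `F_ε` (for `ε < κ`) of `(ε+1)`-sequences of product elements
(encoded as functions `Ordinal → ∏ Ji`, depending only on the coordinates `≤ ε`) such that
`f_ζ ≤_{I*} g_{F_ζ(⟨f_ε : ε ≤ ζ⟩)}` always, and whenever all values `F_ζ(⟨f_ε : ε ≤ ζ⟩)`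
are `≤_J t`, positively many coordinates `i` satisfy `f_ε(i) ≤ g_t(i)` for all `ε < κ`;
then `{i < i* : OBB_{J_i}(C̄, I)}` is `I*`-positive. -/
theorem stmt7 {ι : Type 1} {J : Type 1} [PartialOrder J]
    (Ji : ι → Type 1) [∀ i, PartialOrder (Ji i)]
    (S : Set Ordinal) (C : Ordinal → Set Ordinal)
    (I : Set (Set Ordinal)) (Istar : Set (Set ι)) (κ : Cardinal.{1})
    -- (a)
    (hOBB : OBB J S C I) (hI : IsIdealOn I S) (hC : ∀ δ ∈ S, C δ ⊆ Set.Iio δ)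
    (hotp : ∀ δ ∈ S, otp (C δ) = κ.ord) (htree : TreeLike S C)
    -- (b) `I` is `|i*|⁺`-complete
    (hIcomp : IdealComplete I (Order.succ #ι))
    -- (c)
    (hJi : ∀ i, ∀ s : Ji i, ∃ t : Ji i, s < t)
    -- (d)
    (hIstar : IsIdeal Istar)
    -- (e)
    (g : J → ∀ i, Ji i)
    (hcof : ∀ f : ∀ i, Ji i, ∃ t : J, prodLE Ji Istar f (g t))
    (hmono : ∀ s t : J, s ≤ t → prodLE Ji Istar (g s) (g t))
    -- (f): `F ζ` encodes `F_ζ`, a function of `(ζ+1)`-sequences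
    (F : Ordinal.{1} → (Ordinal.{1} → ∀ i, Ji i) → J)
    (hFdep : ∀ ζ < κ.ord, ∀ fs fs' : Ordinal.{1} → ∀ i, Ji i,
      (∀ ε ≤ ζ, fs ε = fs' ε) → F ζ fs = F ζ fs')
    (hF : ∀ ζ < κ.ord, ∀ fs : Ordinal.{1} → ∀ i, Ji i,
      prodLE Ji Istar (fs ζ) (g (F ζ fs)))
    (hFbound : ∀ fs : Ordinal.{1} → ∀ i, Ji i, ∀ t : J,
      (∀ ζ < κ.ord, F ζ fs ≤ t) →
      {i | ∀ ε < κ.ord, fs ε i ≤ g t i} ∉ Istar) :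
    {i | OBB (Ji i) S C I} ∉ Istar := by
  classical
  intro hA
  obtain ⟨tb, htb⟩ := hOBB
  have hfail : ∀ i, ¬ OBB (Ji i) S C I → ∃ f : Ordinal → Ji i,
      {δ ∈ S | ∀ α ∈ C δ, f α ≤ g (tb δ) i} ∈ I := by
    intro i hi
    by_contra hcon
    push_neg at hcon
    exact hi ⟨fun δ => g (tb δ) i, hcon⟩
  obtain ⟨fI, hfI⟩ : ∃ fI : ∀ i, Ordinal.{0} → Ji i, ∀ i, ¬ OBB (Ji i) S C I →
      {δ ∈ S | ∀ α ∈ C δ, fI i α ≤ g (tb δ) i} ∈ I := by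
    refine ⟨fun i => if h : OBB (Ji i) S C I then fun _ => g (tb 0) i
      else Classical.choose (hfail i h), fun i h => ?_⟩
    simp only [dif_neg h]
    exact Classical.choose_spec (hfail i h)
  obtain ⟨seq, hseq⟩ : ∃ seq : Ordinal.{0} → Ordinal.{1} → ∀ i, Ji i,
      ∀ δ ζ (h : ζ < otp (C δ)),
        seq δ ζ = fun i => fI i (Ordinal.enum (Subrel ((· < ·) : Ordinal.{0} → Ordinal.{0} → Prop) (· ∈ C δ)) ⟨ζ, h⟩).1 :=
    ⟨fun δ ζ => if h : ζ < otp (C δ) then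
      (fun i => fI i (Ordinal.enum (Subrel ((· < ·) : Ordinal.{0} → Ordinal.{0} → Prop) (· ∈ C δ)) ⟨ζ, h⟩).1)
      else fun i => fI i 0, fun δ ζ h => dif_pos h⟩
  obtain ⟨hD, hhD⟩ : ∃ hD : Ordinal.{0} → J, ∀ α (h : ∃ δ, δ ∈ S ∧ α ∈ C δ),
      hD α = F (otp (C h.choose ∩ Set.Iio α)) (seq h.choose) :=
    ⟨fun α => if h : ∃ δ, δ ∈ S ∧ α ∈ C δ then
      F (otp (C h.choose ∩ Set.Iio α)) (seq h.choose) else tb 0, fun α h => dif_pos h⟩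
  have hidxlt : ∀ δ, δ ∈ S → ∀ α, α ∈ C δ → otp (C δ ∩ Set.Iio α) < κ.ord := by
    intro δ hδ α hα
    rw [← hotp δ hδ, stmt7_otp_typein hα]
    exact Ordinal.typein_lt_type _ _
  have key : ∀ δ, δ ∈ S → ∀ α, α ∈ C δ →
      hD α = F (otp (C δ ∩ Set.Iio α)) (seq δ) := by
    intro δ hδ α hα
    have hex : ∃ δ', δ' ∈ S ∧ α ∈ C δ' := ⟨δ, hδ, hα⟩
    rw [hhD α hex]
    obtain ⟨hδ', hα'⟩ := hex.choose_spec
    have hidx : otp (C hex.choose ∩ Set.Iio α) = otp (C δ ∩ Set.Iio α) := by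
      rw [htree hex.choose hδ' δ hδ α hα' hα]
    rw [hidx]
    refine hFdep _ (hidxlt δ hδ α hα) _ _ ?_
    intro ε hε
    have hεδ : ε < otp (C δ) := by
      rw [hotp δ hδ]; exact lt_of_le_of_lt hε (hidxlt δ hδ α hα)
    have hεδ' : ε < otp (C hex.choose) := by
      rw [hotp hex.choose hδ']
      exact lt_of_le_of_lt hε (hidxlt δ hδ α hα)
    rw [hseq hex.choose ε hεδ', hseq δ ε hεδ]
    have henum := stmt7_enum_eq htree hδ' hδ hα' hα (le_of_le_of_eq hε hidx.symm) hεδ' hεδ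
    rw [henum]
  have hBpos := htb hD
  have hBsub : {δ ∈ S | ∀ α ∈ C δ, hD α ≤ tb δ} ⊆
      ⋃₀ ((fun i => {δ ∈ S | ∀ α ∈ C δ, fI i α ≤ g (tb δ) i}) ''
        {i | ¬ OBB (Ji i) S C I}) := by
    rintro δ ⟨hδS, hall⟩
    have h1 : ∀ ζ, ζ < κ.ord → F ζ (seq δ) ≤ tb δ := by
      intro ζ hζ
      have hζ' : ζ < otp (C δ) := by rw [hotp δ hδS]; exact hζ
      have h2 : hD (Ordinal.enum (Subrel ((· < ·) : Ordinal.{0} → Ordinal.{0} → Prop) (· ∈ C δ)) ⟨ζ, hζ'⟩).1 = F ζ (seq δ) := by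
        rw [key δ hδS _ (Ordinal.enum (Subrel ((· < ·) : Ordinal.{0} → Ordinal.{0} → Prop) (· ∈ C δ)) ⟨ζ, hζ'⟩).2]
        congr 1
        rw [stmt7_otp_typein (Ordinal.enum (Subrel ((· < ·) : Ordinal.{0} → Ordinal.{0} → Prop) (· ∈ C δ)) ⟨ζ, hζ'⟩).2]
        exact Ordinal.typein_enum _ _
      exact h2 ▸ hall _ (Ordinal.enum (Subrel ((· < ·) : Ordinal.{0} → Ordinal.{0} → Prop) (· ∈ C δ)) ⟨ζ, hζ'⟩).2
    have h2 := hFbound (seq δ) (tb δ) h1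
    have h3 : ¬ ({i | ∀ ε < κ.ord, seq δ ε i ≤ g (tb δ) i} ⊆
        {i | OBB (Ji i) S C I}) := by
      intro hsub
      exact h2 (hIstar.mono _ hA _ hsub)
    obtain ⟨i, hi1, hi2⟩ := Set.not_subset.1 h3
    refine ⟨_, ⟨i, hi2, rfl⟩, hδS, ?_⟩
    intro α hα
    have hidx' : otp (C δ ∩ Set.Iio α) < otp (C δ) := by
      rw [hotp δ hδS]; exact hidxlt δ hδS α hα
    have hval := hi1 _ (hidxlt δ hδS α hα)
    rw [hseq δ _ hidx'] at hval
    have henum : (Ordinal.enum (Subrel ((· < ·) : Ordinal.{0} → Ordinal.{0} → Prop) (· ∈ C δ))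
        ⟨otp (C δ ∩ Set.Iio α), hidx'⟩).1 = α := by
      have he : Ordinal.enum (Subrel ((· < ·) : Ordinal.{0} → Ordinal.{0} → Prop) (· ∈ C δ))
          ⟨otp (C δ ∩ Set.Iio α), hidx'⟩ = ⟨α, hα⟩ := by
        apply Ordinal.typein_injective (Subrel ((· < ·) : Ordinal.{0} → Ordinal.{0} → Prop) (· ∈ C δ))
        exact (Ordinal.typein_enum _ _).trans (stmt7_otp_typein hα)
      rw [he]
    rw [henum] at hval
    exact hval
  have hUI : ⋃₀ ((fun i => {δ ∈ S | ∀ α ∈ C δ, fI i α ≤ g (tb δ) i}) ''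
      {i | ¬ OBB (Ji i) S C I}) ∈ I := by
    apply hIcomp
    · rintro x ⟨i, hi, rfl⟩
      exact hfI i hi
    · refine lt_of_le_of_lt Cardinal.mk_image_le ?_
      refine lt_of_le_of_lt (Cardinal.mk_set_le _) ?_
      exact Order.lt_succ _
  exact hBpos (hI.mono _ hUI _ hBsub)
end

section
/- Assume: (a) OBB⁺_J(C̄, I) holds and κ is a regular cardinal with |C_δ| < κ for every δ ∈ S; (b) I is a (2^{|i*|})⁺-complete ideal on S; (c) ⟨J_i : i < i*⟩ is a sequence of partial orders, each satisfying (∀s)(∃t)(s < t); (d) I* is a κ-complete ideal on i*; (e) J is a partial order, ḡ = ⟨g_t : t ∈ J⟩ with g_t ∈ ∏_{i<i*} J_i, and s <_J t implies g_s <_{I*} g_t; (f) whenever ε* < κ and g^ε ∈ ∏_{i<i*} J_i for ε < ε*, there is A ∈ I*⁺ such that for each ε < ε* there is t ∈ J with {i ∈ A : ¬(g^ε(i) <_{J_i} g_t(i))} ∈ I*. Then {i < i* : OBB_{J_i}(C̄, I)} ∈ I*⁺. -/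
open Set Cardinal

universe u v

/-- Auxiliary: in an ideal-like family, removing a small set from a positive set
leaves a positive set. -/
lemma diff_not_mem_aux {α : Type*} {I : Set (Set α)}
    (hmono : ∀ A ∈ I, ∀ B ⊆ A, B ∈ I) (hunion : ∀ A ∈ I, ∀ B ∈ I, A ∪ B ∈ I)
    {A U : Set α} (hA : A ∉ I) (hU : U ∈ I) : A \ U ∉ I := by
  intro h
  apply hA
  apply hmono _ (hunion _ h _ hU)
  intro x hx
  by_cases hxU : x ∈ U
  · exact Or.inr hxU
  · exact Or.inl ⟨hx, hxU⟩

/-- Assume (a) `OBB⁺_J(C̄, I)` and `κ` regular with `|C_δ| < κ`;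
(b) `I` is `(2^{|i*|})⁺`-complete; (c) each `J_i` has no maximal element;
(d) `I*` is a `κ`-complete ideal on `i*`; (e) `s <_J t → g_s <_{I*} g_t`;
(f) any `< κ` many product elements are, on some `I*`-positive set, individually
almost-dominated by members of `{g_t : t ∈ J}`.
Then `{i < i* : OBB_{J_i}(C̄, I)}` is `I*`-positive. -/
theorem stmt8 {ι : Type 1} {J : Type 1} [PartialOrder J]
    (Ji : ι → Type 1) [∀ i, PartialOrder (Ji i)]
    (S : Set Ordinal) (C : Ordinal → Set Ordinal)
    (I : Set (Set Ordinal)) (Istar : Set (Set ι)) (κ : Cardinal.{1})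
    -- (a)
    (hOBB : OBBplus J S C I) (hI : IsIdealOn I S) (hC : ∀ δ ∈ S, C δ ⊆ Set.Iio δ)
    (hκ : κ.IsRegular) (hCcard : ∀ δ ∈ S, #(C δ) < κ)
    -- (b)
    (hIcomp : IdealComplete I (Order.succ (2 ^ #ι)))
    -- (c)
    (hJi : ∀ i, ∀ s : Ji i, ∃ t : Ji i, s < t)
    -- (d)
    (hIstar : IsIdeal Istar)
    (hIstarComp : IdealComplete Istar κ)
    -- (e)
    (g : J → ∀ i, Ji i)
    (hmono : ∀ s t : J, s < t → prodLT Ji Istar (g s) (g t))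
    -- (f)
    (hbound : ∀ es < κ.ord, ∀ gs : Ordinal.{1} → ∀ i, Ji i,
      ∃ A : Set ι, A ∉ Istar ∧
        ∀ ε < es, ∃ t : J, {i | i ∈ A ∧ ¬ gs ε i < g t i} ∈ Istar) :
    {i | OBB (Ji i) S C I} ∉ Istar := by
  classical
  intro hmem
  obtain ⟨t, ht⟩ := hOBB
  haveI hJne : Nonempty J := ⟨t 0⟩
  set B : Set ι := {i | OBB (Ji i) S C I} with hBdef
  -- For every `i` outside `B`, the candidate `δ ↦ g (t δ) i` fails to witness `OBB (Ji i)`.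
  have hF : ∀ i : ι, ∃ F : Ordinal → Ji i, i ∉ B →
      {δ ∈ S | ∀ α ∈ C δ, F α ≤ g (t δ) i} ∈ I := by
    intro i
    by_cases hi : i ∈ B
    · exact ⟨fun _ => g (t 0) i, fun h => absurd hi h⟩
    · have hno : ¬ OBB (Ji i) S C I := hi
      unfold OBB at hno
      push_neg at hno
      obtain ⟨f, hf⟩ := hno fun δ => g (t δ) i
      exact ⟨f, fun _ => hf⟩
  choose F hFspec using hF
  -- Main step: for each `δ ∈ S`, a positive set `A` avoiding `B` and dominating bounds.
  have main : ∀ δ ∈ S, ∃ (A : Set ι) (tt : Ordinal → J),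
      A ∉ Istar ∧ (∀ i ∈ A, i ∉ B) ∧ ∀ α ∈ C δ, ∀ i ∈ A, F i α < g (tt α) i := by
    intro δ hδ
    have hclt : #(C δ) < κ := hCcard δ hδ
    set c : Cardinal.{1} := #(C δ) with hc
    have hmk : #(↥(C δ)) = #(c.ord.ToType) := (Cardinal.mk_ord_toType c).symm
    obtain ⟨e⟩ := Cardinal.eq.mp hmk
    set en := @Ordinal.ToType.mk c.ord with hen
    set enc : Ordinal.{0} → Ordinal.{1} := fun α =>
      if h : α ∈ C δ then (en.symm (e ⟨α, h⟩)).1 else 0 with henc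
    have henclt : ∀ α, ∀ h : α ∈ C δ, enc α < c.ord := by
      intro α h
      simp only [henc, dif_pos h]
      exact (en.symm (e ⟨α, h⟩)).2
    set dec : Ordinal.{1} → Ordinal.{0} := fun ε =>
      if h : ε < c.ord then ((e.symm (en ⟨ε, h⟩)) : Ordinal) else 0 with hdec
    have hde : ∀ α, ∀ h : α ∈ C δ, dec (enc α) = α := by
      intro α h
      have h1 := henclt α h
      simp only [hdec, dif_pos h1]
      have h2 : (⟨enc α, h1⟩ : Set.Iio c.ord) = en.symm (e ⟨α, h⟩) := by
        apply Subtype.ext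
        simp only [henc, dif_pos h]
      rw [h2]
      simp
    obtain ⟨A, hA, hdom⟩ := hbound c.ord (Cardinal.ord_lt_ord.mpr hclt)
      (fun ε i => F i (dec ε))
    have hdom' : ∀ ε : Ordinal.{1}, ∃ tJ : J, ε < c.ord →
        {i | i ∈ A ∧ ¬ F i (dec ε) < g tJ i} ∈ Istar := by
      intro ε
      by_cases h : ε < c.ord
      · obtain ⟨tJ, htJ⟩ := hdom ε h
        exact ⟨tJ, fun _ => htJ⟩
      · exact ⟨t 0, fun h' => absurd h' h⟩
    choose tsel htsel using hdom'
    set bad : Ordinal.{0} → Set ι :=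
      fun α => {i | i ∈ A ∧ ¬ F i (dec (enc α)) < g (tsel (enc α)) i} with hbad
    have hbadmem : ∀ α ∈ C δ, bad α ∈ Istar := fun α h => htsel (enc α) (henclt α h)
    have hUmem : B ∪ ⋃₀ (bad '' (C δ)) ∈ Istar := by
      have h1 : insert B (bad '' (C δ)) ⊆ Istar := by
        intro Y hY
        rcases hY with rfl | ⟨α, hα, rfl⟩
        · exact hmem
        · exact hbadmem α hα
      have h2 : #(insert B (bad '' (C δ)) : Set (Set ι)) < κ := by
        calc #(insert B (bad '' (C δ)) : Set (Set ι)) ≤ #(bad '' (C δ)) + 1 :=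
              Cardinal.mk_insert_le
          _ ≤ c + 1 := add_le_add_left Cardinal.mk_image_le 1
          _ < κ := Cardinal.add_lt_of_lt hκ.aleph0_le hclt
              (lt_of_lt_of_le Cardinal.one_lt_aleph0 hκ.aleph0_le)
      have h3 := hIstarComp _ h1 h2
      rwa [Set.sUnion_insert] at h3
    refine ⟨A \ (B ∪ ⋃₀ (bad '' (C δ))), fun α => tsel (enc α), ?_, ?_, ?_⟩
    · exact diff_not_mem_aux hIstar.mono hIstar.union_mem hA hUmem
    · intro i hi hiB
      exact hi.2 (Or.inl hiB)
    · intro α hα i hi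
      have hib : i ∉ bad α := fun hb => hi.2 (Or.inr ⟨bad α, ⟨α, hα, rfl⟩, hb⟩)
      have hib' : ¬ (i ∈ A ∧ ¬ F i (dec (enc α)) < g (tsel (enc α)) i) := hib
      rw [hde α hα] at hib'
      by_contra hcon
      exact hib' ⟨hi.1, hcon⟩
  choose! Aset ttf hA1 hA2 hA3 using main
  -- Fiber `δ ↦ Aset δ` over the `≤ 2^#ι` possible values.
  have hfib : ∃ X : Set ι, {δ | δ ∈ S ∧ Aset δ = X} ∉ I := by
    by_contra hcon
    push_neg at hcon
    have hT : ((fun X : Set ι => {δ | δ ∈ S ∧ Aset δ = X}) '' Set.univ) ⊆ I := by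
      rintro Y ⟨X, -, rfl⟩
      exact hcon X
    have hcard : #((fun X : Set ι => {δ | δ ∈ S ∧ Aset δ = X}) '' Set.univ)
        < Order.succ (2 ^ #ι) := by
      refine lt_of_le_of_lt ?_ (Order.lt_succ _)
      calc #((fun X : Set ι => {δ | δ ∈ S ∧ Aset δ = X}) '' Set.univ)
          ≤ #(Set.univ : Set (Set ι)) := Cardinal.mk_image_le
        _ = #(Set ι) := Cardinal.mk_univ
        _ = 2 ^ #ι := Cardinal.mk_set
    have hun := hIcomp _ hT hcard
    refine hI.base_not_mem (hI.mono _ hun S ?_)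
    intro δ hδ
    exact ⟨_, ⟨Aset δ, trivial, rfl⟩, hδ, rfl⟩
  obtain ⟨X, hX⟩ := hfib
  have hXne : {δ | δ ∈ S ∧ Aset δ = X}.Nonempty := by
    rcases Set.eq_empty_or_nonempty {δ | δ ∈ S ∧ Aset δ = X} with h | h
    · exact absurd (by rw [h]; exact hI.empty_mem) hX
    · exact h
  obtain ⟨δ₀, hδ₀S, hδ₀X⟩ := hXne
  have hXpos : X ∉ Istar := hδ₀X ▸ hA1 δ₀ hδ₀S
  have hXB : ∀ i ∈ X, i ∉ B := by
    intro i hi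
    exact hA2 δ₀ hδ₀S i (by rw [hδ₀X]; exact hi)
  -- Build `f♦` and apply `OBB⁺`.
  set fd : Ordinal → J := fun α =>
    if h : ∃ δ, (δ ∈ S ∧ Aset δ = X) ∧ α ∈ C δ then ttf h.choose α else t 0 with hfd
  have hfdprop : ∀ α δ, δ ∈ S → Aset δ = X → α ∈ C δ → ∀ i ∈ X, F i α < g (fd α) i := by
    intro α δ hδ hXeq hα i hiX
    have hex : ∃ δ, (δ ∈ S ∧ Aset δ = X) ∧ α ∈ C δ := ⟨δ, ⟨hδ, hXeq⟩, hα⟩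
    simp only [hfd, dif_pos hex]
    obtain ⟨⟨hd1, hd2⟩, hd3⟩ := hex.choose_spec
    exact hA3 _ hd1 α hd3 i (by rw [hd2]; exact hiX)
  have hG := ht fd
  have hS2pos : {δ | δ ∈ S ∧ Aset δ = X} ∩ {δ ∈ S | ∀ α ∈ C δ, fd α ≤ t δ} ∉ I := by
    intro h
    apply hX
    apply hI.mono _ (hI.union_mem _ h _ hG)
    intro δ hδ
    by_cases hg : δ ∈ {δ ∈ S | ∀ α ∈ C δ, fd α ≤ t δ}
    · exact Or.inl ⟨hδ, hg⟩
    · exact Or.inr ⟨hδ.1, hg⟩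
  have hsub : {δ | δ ∈ S ∧ Aset δ = X} ∩ {δ ∈ S | ∀ α ∈ C δ, fd α ≤ t δ}
      ⊆ ⋃₀ ((fun i => {δ ∈ S | ∀ α ∈ C δ, F i α ≤ g (t δ) i}) '' X) := by
    rintro δ ⟨⟨hδS, hAeq⟩, -, hδG⟩
    set Z : Ordinal → Set ι := fun α => {i | ¬ g (fd α) i ≤ g (t δ) i} with hZ
    have hZmem : ∀ α ∈ C δ, Z α ∈ Istar := by
      intro α hα
      have hle : fd α ≤ t δ := hδG α hα
      rcases lt_or_eq_of_le hle with hlt | heq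
      · refine hIstar.mono _ (hmono _ _ hlt) _ ?_
        intro i hi hlt2
        exact hi (le_of_lt hlt2)
      · have hZe : Z α = ∅ := by
          rw [hZ]
          ext i
          simp [heq]
        rw [hZe]
        exact hIstar.empty_mem
    have hW : X \ ⋃₀ (Z '' (C δ)) ∉ Istar := by
      apply diff_not_mem_aux hIstar.mono hIstar.union_mem hXpos
      apply hIstarComp
      · rintro Y ⟨α, hα, rfl⟩
        exact hZmem α hα
      · exact lt_of_le_of_lt Cardinal.mk_image_le (hCcard δ hδS)
    have hWne : (X \ ⋃₀ (Z '' (C δ))).Nonempty := by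
      rcases Set.eq_empty_or_nonempty (X \ ⋃₀ (Z '' (C δ))) with h | h
      · exact absurd (by rw [h]; exact hIstar.empty_mem) hW
      · exact h
    obtain ⟨i, hiX, hiZ⟩ := hWne
    refine ⟨_, ⟨i, hiX, rfl⟩, hδS, ?_⟩
    intro α hα
    have h1 : F i α < g (fd α) i := hfdprop α δ hδS hAeq hα i hiX
    have h2 : g (fd α) i ≤ g (t δ) i := by
      by_contra hcon
      exact hiZ ⟨Z α, ⟨α, hα, rfl⟩, hcon⟩
    exact le_trans (le_of_lt h1) h2
  -- Final contradiction: a positive set is covered by `≤ #ι` many `I`-small sets.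
  apply hS2pos
  refine hI.mono _ ?_ _ hsub
  apply hIcomp
  · rintro Y ⟨i, hiX, rfl⟩
    exact hFspec i (hXB i hiX)
  · refine lt_of_le_of_lt ?_ (Order.lt_succ _)
    calc #((fun i => {δ ∈ S | ∀ α ∈ C δ, F i α ≤ g (t δ) i}) '' X)
        ≤ #X := Cardinal.mk_image_le
      _ ≤ #ι := Cardinal.mk_set_le X
      _ ≤ 2 ^ #ι := (Cardinal.cantor _).le
end

section
/- Assume: (a) OBB⁺_J(C̄, I) holds and κ is a regular cardinal with |C_δ| < κ for every δ ∈ S; (b) I is a (2^{|i*|})⁺-complete ideal on S; (c) ⟨J_i : i < i*⟩ is a sequence of partial orders, each satisfying (∀s)(∃t)(s < t); (d) I* is a κ-complete ideal on i*; (e) J is a partial order, ḡ = ⟨g_t : t ∈ J⟩ with g_t ∈ ∏_{i<i*} J_i, and s <_J t implies g_s <_{I*} g_t; (f) for every A₀ ∈ I*⁺: whenever ε* < κ and g^ε ∈ ∏_{i<i*} J_i for ε < ε*, there is A ⊆ A₀ with A ∈ I*⁺ such that for each ε < ε* there is t ∈ J with {i ∈ A : ¬(g^ε(i) <_{J_i}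 g_t(i))} ∈ I*. Then {i < i* : OBB_{J_i}(C̄, I)} = i* mod I*. -/
open Set Cardinal

universe u v

/-- As in Statement 8, but with (f) relativized to every `I*`-positive
set `A₀`; the conclusion strengthens to `{i < i* : OBB_{J_i}(C̄, I)} = i*` mod `I*`. -/
theorem stmt9 {ι : Type 1} {J : Type 1} [PartialOrder J]
    (Ji : ι → Type 1) [∀ i, PartialOrder (Ji i)]
    (S : Set Ordinal) (C : Ordinal → Set Ordinal)
    (I : Set (Set Ordinal)) (Istar : Set (Set ι)) (κ : Cardinal.{1})
    -- (a)
    (hOBB : OBBplus J S C I) (hI : IsIdealOn I S) (hC : ∀ δ ∈ S, C δ ⊆ Set.Iio δ)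
    (hκ : κ.IsRegular) (hCcard : ∀ δ ∈ S, #(C δ) < κ)
    -- (b)
    (hIcomp : IdealComplete I (Order.succ (2 ^ #ι)))
    -- (c)
    (hJi : ∀ i, ∀ s : Ji i, ∃ t : Ji i, s < t)
    -- (d)
    (hIstar : IsIdeal Istar)
    (hIstarComp : IdealComplete Istar κ)
    -- (e)
    (g : J → ∀ i, Ji i)
    (hmono : ∀ s t : J, s < t → prodLT Ji Istar (g s) (g t))
    -- (f)
    (hbound : ∀ A₀ : Set ι, A₀ ∉ Istar → ∀ es < κ.ord, ∀ gs : Ordinal.{1} → ∀ i, Ji i,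
      ∃ A : Set ι, A ⊆ A₀ ∧ A ∉ Istar ∧
        ∀ ε < es, ∃ t : J, {i | i ∈ A ∧ ¬ gs ε i < g t i} ∈ Istar) :
    {i | ¬ OBB (Ji i) S C I} ∈ Istar := by
  classical
  by_contra hB
  obtain ⟨t, ht⟩ := hOBB
  -- witnesses of failure of OBB for bad coordinates
  have hD : ∀ i : ι, ∃ fi : Ordinal → Ji i,
      ¬ OBB (Ji i) S C I → {δ ∈ S | ∀ α ∈ C δ, fi α ≤ g (t δ) i} ∈ I := by
    intro i
    by_cases hi : OBB (Ji i) S C I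
    · exact ⟨fun _ => g (t 0) i, fun h' => absurd hi h'⟩
    · rw [OBB] at hi
      push_neg at hi
      obtain ⟨fi, hfi⟩ := hi (fun δ => g (t δ) i)
      exact ⟨fi, fun _ => hfi⟩
  choose fi hfi using hD
  -- step: per δ ∈ S, apply (f) to the family ⟨fi · α : α ∈ C δ⟩
  have key : ∀ δ : Ordinal, ∃ A : Set ι, A ⊆ {i | ¬ OBB (Ji i) S C I} ∧ A ∉ Istar ∧
      (δ ∈ S → ∀ α ∈ C δ, ∃ t' : J,
        {i | i ∈ A ∧ ¬ fi i α < g t' i} ∈ Istar) := by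
    intro δ
    by_cases hδ : δ ∈ S
    · have hc : #(C δ) < κ := hCcard δ hδ
      have hes : (#(C δ)).ord < κ.ord := Cardinal.ord_lt_ord.2 hc
      obtain ⟨e⟩ := Cardinal.eq.1 (Cardinal.mk_ord_toType (#(C δ)))
      set en := Ordinal.ToType.mk (o := (#(C δ)).ord) with hen
      set gs : Ordinal.{1} → ∀ i, Ji i := fun ε =>
        if hε : ε < (#(C δ)).ord then (fun i => fi i ((e (en ⟨ε, hε⟩) : ↥(C δ)) : Ordinal))
        else (fun i => g (t 0) i) with hgs
      obtain ⟨A, hAB, hApos, hAt⟩ := hbound _ hB (#(C δ)).ord hes gs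
      refine ⟨A, hAB, hApos, fun _ α hα => ?_⟩
      obtain ⟨x, hx⟩ := e.surjective ⟨α, hα⟩
      have hε : (en.symm x : Ordinal) < (#(C δ)).ord := (en.symm x).2
      obtain ⟨t', ht'⟩ := hAt _ hε
      refine ⟨t', ?_⟩
      have h1 : (⟨(en.symm x : Ordinal), hε⟩ : Set.Iio (#(C δ)).ord) = en.symm x :=
        Subtype.ext rfl
      have h2 : gs (en.symm x : Ordinal) = fun i => fi i α := by
        rw [hgs]
        simp only [dif_pos hε]
        rw [h1, en.apply_symm_apply, hx]
      rw [h2] at ht'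
      exact ht'
    · exact ⟨_, subset_rfl, hB, fun hδ' => absurd hδ' hδ⟩
  choose A hAB hApos hAkey using key
  -- fix a single value `a` of `A` on an I-positive set
  have hex : ∃ a : Set ι, {δ ∈ S | A δ = a} ∉ I := by
    by_contra hall
    push_neg at hall
    have hT : Set.range (fun a => {δ ∈ S | A δ = a}) ⊆ I := by
      rintro _ ⟨a, rfl⟩; exact hall a
    have hcard : #(Set.range (fun a => {δ ∈ S | A δ = a})) < Order.succ (2 ^ #ι) := by
      refine lt_of_le_of_lt ?_ (Order.lt_succ _)
      calc #(Set.range (fun a => {δ ∈ S | A δ = a})) ≤ #(Set ι) := Cardinal.mk_range_le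
        _ = 2 ^ #ι := Cardinal.mk_set
    have hU : ⋃₀ Set.range (fun a => {δ ∈ S | A δ = a}) ∈ I := hIcomp _ hT hcard
    exact hI.base_not_mem (hI.mono _ hU S (fun δ hδ => ⟨_, ⟨A δ, rfl⟩, hδ, rfl⟩))
  obtain ⟨a, hSa⟩ := hex
  have hane : {δ ∈ S | A δ = a}.Nonempty := by
    by_contra hne
    rw [Set.not_nonempty_iff_eq_empty] at hne
    rw [hne] at hSa
    exact hSa hI.empty_mem
  obtain ⟨δ₀, hδ₀S, hδ₀a⟩ := hane
  have haB : a ⊆ {i | ¬ OBB (Ji i) S C I} := hδ₀a ▸ hAB δ₀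
  have hapos : a ∉ Istar := hδ₀a ▸ hApos δ₀
  -- define f : Ordinal → J
  have hfex : ∀ α : Ordinal, ∃ tf : J,
      (∃ t' : J, {i | i ∈ a ∧ ¬ fi i α < g t' i} ∈ Istar) →
      {i | i ∈ a ∧ ¬ fi i α < g tf i} ∈ Istar := by
    intro α
    by_cases h' : ∃ t' : J, {i | i ∈ a ∧ ¬ fi i α < g t' i} ∈ Istar
    · exact ⟨h'.choose, fun _ => h'.choose_spec⟩
    · exact ⟨t 0, fun hc => absurd hc h'⟩
  choose f hf using hfex
  have hfprop : ∀ δ ∈ S, A δ = a → ∀ α ∈ C δ,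
      {i | i ∈ a ∧ ¬ fi i α < g (f α) i} ∈ Istar := by
    intro δ hδS hδa α hα
    obtain ⟨t', ht'⟩ := hAkey δ hδS α hα
    rw [hδa] at ht'
    exact hf α ⟨t', ht'⟩
  -- apply OBB⁺ for J to f
  have hGc := ht f
  have hGa : {δ ∈ S | A δ = a} ∩ {δ ∈ S | ∀ α ∈ C δ, f α ≤ t δ} ∉ I := by
    intro hmem
    apply hSa
    refine hI.mono _ (hI.union_mem _ hmem _ hGc) _ ?_
    intro δ hδ
    by_cases h' : δ ∈ {δ ∈ S | ∀ α ∈ C δ, f α ≤ t δ}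
    · exact Or.inl ⟨hδ, h'⟩
    · exact Or.inr ⟨hδ.1, h'⟩
  -- each good δ lies in some bad_i, i ∈ a
  have hstep8 : ∀ δ ∈ {δ ∈ S | A δ = a} ∩ {δ ∈ S | ∀ α ∈ C δ, f α ≤ t δ},
      ∃ i ∈ a, δ ∈ {δ' ∈ S | ∀ α ∈ C δ', fi i α ≤ g (t δ') i} := by
    rintro δ ⟨hδFa, hδG⟩
    set NM : ↥(C δ) → Set ι := fun α =>
      {i | i ∈ a ∧ ¬ fi i ↑α < g (f ↑α) i} ∪
        (if f ↑α < t δ then {i | ¬ g (f ↑α) i < g (t δ) i} else ∅) with hNMdef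
    have hNM : ∀ α, NM α ∈ Istar := by
      intro α
      apply hIstar.union_mem
      · exact hfprop δ hδFa.1 hδFa.2 ↑α α.2
      · split
        · exact hmono _ _ ‹_›
        · exact hIstar.empty_mem
    have hU : ⋃₀ Set.range NM ∈ Istar := by
      refine hIstarComp _ ?_ ?_
      · rintro _ ⟨α, rfl⟩; exact hNM α
      · calc #(Set.range NM) ≤ #(↥(C δ)) := Cardinal.mk_range_le
          _ < κ := hCcard δ hδFa.1
    have hnot : ¬ a ⊆ ⋃₀ Set.range NM := fun hsub => hapos (hIstar.mono _ hU _ hsub)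
    obtain ⟨i, hia, hiU⟩ := Set.not_subset.1 hnot
    refine ⟨i, hia, hδG.1, fun α hα => ?_⟩
    have hiNM : i ∉ NM ⟨α, hα⟩ := fun hmem => hiU ⟨NM ⟨α, hα⟩, ⟨_, rfl⟩, hmem⟩
    have h1 : fi i α < g (f α) i := by
      by_contra hcon
      exact hiNM (Or.inl ⟨hia, hcon⟩)
    rcases lt_or_eq_of_le (hδG.2 α hα) with hlt | heq
    · have h3 : g (f α) i < g (t δ) i := by
        by_contra hcon
        refine hiNM (Or.inr ?_)
        show i ∈ (if f ↑(⟨α, hα⟩ : ↥(C δ)) < t δ then {i | ¬ g (f ↑(⟨α, hα⟩ : ↥(C δ))) i < g (t δ) i} else ∅)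
        rw [if_pos hlt]
        exact hcon
      exact (h1.trans h3).le
    · rw [← heq]; exact h1.le
  -- conclude: covered by ≤ 2^#ι many I-small sets
  have hUbad : ⋃₀ Set.range (fun i : ↥a => {δ' ∈ S | ∀ α ∈ C δ', fi ↑i α ≤ g (t δ') ↑i}) ∈ I := by
    refine hIcomp _ ?_ ?_
    · rintro _ ⟨i, rfl⟩
      exact hfi ↑i (haB i.2)
    · calc #(Set.range (fun i : ↥a => {δ' ∈ S | ∀ α ∈ C δ', fi ↑i α ≤ g (t δ') ↑i}))
          ≤ #(↥a) := Cardinal.mk_range_le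
        _ ≤ #ι := Cardinal.mk_set_le a
        _ ≤ 2 ^ #ι := (Cardinal.cantor _).le
        _ < Order.succ (2 ^ #ι) := Order.lt_succ _
  apply hGa
  refine hI.mono _ hUbad _ ?_
  intro δ hδ
  obtain ⟨i, hia, hmem⟩ := hstep8 δ hδ
  exact ⟨_, ⟨⟨i, hia⟩, rfl⟩, hmem⟩
end

section
/- Let θ > κ be regular cardinals and λ ≥ χ regular cardinals with χ ∈ 𝔇_{θ,κ}. Let C̄ = ⟨C_δ : δ ∈ S⟩ where S ⊆ λ is stationary in λ and each C_δ ⊆ δ has order type κ with sup C_δ = δ, and let I be a θ⁺-complete ideal on S. If OBB_χ(C̄, I) holds, then OBB_θ(C̄, I) holds. -/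
open Set Cardinal

universe u v

/-- `f` represents an element of `θ^θ`: on the domain `θ` its values are `< θ`. -/
def onDom (θ : Cardinal.{0}) (f : Ordinal → Ordinal) : Prop :=
  ∀ ε < θ.ord, f ε < θ.ord

/-- `g` is a `(≤κ)`-bound of `F ⊆ θ^θ`: for every subfamily `F'` of cardinality `≤ κ`,
the set of `ε < θ` where `g` dominates all of `F'` is unbounded in `θ`. -/
def IsBoundLE (θ κ : Cardinal.{0}) (F : Set (Ordinal → Ordinal)) (g : Ordinal → Ordinal) :
    Prop :=
  ∀ F' ⊆ F, #F' ≤ Cardinal.lift.{1} κ →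
    ∀ α < θ.ord, ∃ ε, α ≤ ε ∧ ε < θ.ord ∧ ∀ f ∈ F', f ε ≤ g ε

/-- `𝔡_{θ,κ}` (with `(≤κ)`-bounds): the least cardinality of a family `F ⊆ θ^θ`
admitting no `(≤κ)`-bound. -/
noncomputable def dLE (θ κ : Cardinal.{0}) : Cardinal.{1} :=
  sInf {c | ∃ F : Set (Ordinal → Ordinal), (∀ f ∈ F, onDom θ f) ∧ #F = c ∧
    ¬ ∃ g, onDom θ g ∧ IsBoundLE θ κ F g}

/-- `C̄ = ⟨C_δ : δ ∈ S⟩` is a (strict) `(λ,κ)`-ladder system: `λ` is regular uncountable,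
`S ⊆ {δ < λ : cf δ = κ}` is stationary in `λ`, and each `C_δ ⊆ δ` has order type `κ`
and is unbounded in `δ`. -/
def IsLadderSystem (lam κ : Cardinal.{0}) (S : Set Ordinal)
    (C : Ordinal → Set Ordinal) : Prop :=
  lam.IsRegular ∧ Cardinal.aleph0 < lam ∧
  (∀ δ ∈ S, δ < lam.ord ∧ Ordinal.cof δ = κ) ∧
  IsStationaryIn S lam.ord ∧
  ∀ δ ∈ S, C δ ⊆ Set.Iio δ ∧ otp (C δ) = Ordinal.lift.{1} κ.ord ∧
    ∀ α < δ, ∃ β ∈ C δ, α ≤ β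

/-- `𝔇_{θ,κ}`: the set of regular cardinals `χ > θ` for which there is a `⊆`-increasing
sequence `⟨F_ε : ε < χ⟩` of subsets of `θ^θ`, covering `θ^θ`, each admitting a
`(≤κ)`-bound. -/
def Dset (θ κ : Cardinal.{0}) : Set Cardinal.{1} :=
  {χ | χ.IsRegular ∧ Cardinal.lift.{1} θ < χ ∧
    ∃ F : Ordinal.{1} → Set (Ordinal.{0} → Ordinal.{0}),
      (∀ ε₁ ε₂, ε₁ ≤ ε₂ → ε₂ < χ.ord → F ε₁ ⊆ F ε₂) ∧
      (∀ ε < χ.ord, ∀ f ∈ F ε, onDom θ f) ∧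
      (∀ ε < χ.ord, ∃ g, onDom θ g ∧ IsBoundLE θ κ (F ε) g) ∧
      (∀ f, onDom θ f → ∃ ε < χ.ord, f ∈ F ε)}

/-- `OBB_θ(C̄, I)` where as partial order we take the ordinals below `θv`. -/
def OBBc (θv : Ordinal.{v}) (S : Set Ordinal.{0}) (C : Ordinal.{0} → Set Ordinal.{0})
    (I : Set (Set Ordinal.{0})) : Prop :=
  ∃ t : Ordinal.{0} → Ordinal.{v}, (∀ δ ∈ S, t δ < θv) ∧
    ∀ f : Ordinal.{0} → Ordinal.{v}, (∀ α ∈ ⋃ δ ∈ S, C δ, f α < θv) →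
      {δ ∈ S | ∀ α ∈ C δ, f α ≤ t δ} ∉ I

/-- Let `θ > κ` be regular, `λ ≥ χ` regular with `χ ∈ 𝔇_{θ,κ}`,
`C̄ = ⟨C_δ : δ ∈ S⟩` with `S ⊆ λ` stationary and `C_δ ⊆ δ` of order type `κ` unbounded
in `δ`, and `I` a `θ⁺`-complete ideal on `S`. If `OBB_χ(C̄, I)` then `OBB_θ(C̄, I)`. -/
theorem stmt12 (θ κ lam : Cardinal.{0}) (χ : Cardinal.{1})
    (hθ : θ.IsRegular) (hκ : κ.IsRegular) (hκθ : κ < θ)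
    (hlamreg : lam.IsRegular) (hχ : χ ∈ Dset θ κ) (hχlam : χ ≤ Cardinal.lift.{1} lam)
    (S : Set Ordinal) (C : Ordinal → Set Ordinal)
    (hS : S ⊆ Set.Iio lam.ord) (hStat : IsStationaryIn S lam.ord)
    (hCsub : ∀ δ ∈ S, C δ ⊆ Set.Iio δ)
    (hCotp : ∀ δ ∈ S, otp (C δ) = Ordinal.lift.{1} κ.ord)
    (hCsup : ∀ δ ∈ S, ∀ α < δ, ∃ β ∈ C δ, α ≤ β)
    (I : Set (Set Ordinal)) (hI : IsIdealOn I S)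
    (hIcomp : IdealComplete I (Order.succ (Cardinal.lift.{1} θ)))
    (hOBBχ : OBBc χ.ord S C I) :
    OBBc θ.ord S C I := by
  classical
  obtain ⟨hχreg, hθχ, F, Fmono, FonDom, Fbound, Fcover⟩ := hχ
  have Fbound' : ∀ ε : Ordinal.{1}, ∃ g, ε < χ.ord → onDom θ g ∧ IsBoundLE θ κ (F ε) g := by
    intro ε
    by_cases h : ε < χ.ord
    · obtain ⟨g, hg⟩ := Fbound ε h
      exact ⟨g, fun _ => hg⟩
    · exact ⟨id, fun h' => absurd h' h⟩
  choose g hg using Fbound'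
  obtain ⟨t, htlt, htpos⟩ := hOBBχ
  have h0θ : (0 : Ordinal.{0}) < θ.ord := by
    rw [← Cardinal.ord_zero]
    exact Cardinal.ord_lt_ord.2 hθ.pos
  by_contra hcon
  rw [OBBc] at hcon
  push_neg at hcon
  set Dom : Set Ordinal.{0} := ⋃ δ ∈ S, C δ with hDom
  have key : ∀ ζ : Ordinal.{0}, ∃ f : Ordinal.{0} → Ordinal.{0}, ζ < θ.ord →
      (∀ α ∈ Dom, f α < θ.ord) ∧
      {δ ∈ S | ∀ α ∈ C δ, f α ≤ g (t δ) ζ} ∈ I := by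
    intro ζ
    by_cases hζ : ζ < θ.ord
    · obtain ⟨f, hf1, hf2⟩ := hcon (fun δ => g (t δ) ζ)
        (fun δ hδ => (hg (t δ) (htlt δ hδ)).1 ζ hζ)
      exact ⟨f, fun _ => ⟨hf1, hf2⟩⟩
    · exact ⟨fun _ => 0, fun h' => absurd h' hζ⟩
  choose fC hfC using key
  -- the function h : for α ∈ Dom, h α ∈ θ^θ
  set h : Ordinal.{0} → Ordinal.{0} → Ordinal.{0} :=
    fun α ζ => if α ∈ Dom then fC ζ α else 0 with hh
  have honDom : ∀ α, onDom θ (h α) := by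
    intro α ζ hζ
    by_cases hα : α ∈ Dom
    · simp only [hh, if_pos hα]
      exact ((hfC ζ hζ).1 α hα)
    · simp only [hh, if_neg hα]
      exact h0θ
  -- the main function f : Dom → χ
  have hne : ∀ α, {ε : Ordinal.{1} | ε < χ.ord ∧ h α ∈ F ε}.Nonempty := by
    intro α
    obtain ⟨ε, hε1, hε2⟩ := Fcover (h α) (honDom α)
    exact ⟨ε, hε1, hε2⟩
  set fm : Ordinal.{0} → Ordinal.{1} :=
    fun α => sInf {ε : Ordinal.{1} | ε < χ.ord ∧ h α ∈ F ε} with hfm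
  have hfmmem : ∀ α, fm α < χ.ord ∧ h α ∈ F (fm α) := fun α => csInf_mem (hne α)
  -- the union of the bad sets
  set T : Set (Set Ordinal.{0}) :=
    (fun ζ => {δ ∈ S | ∀ α ∈ C δ, fC ζ α ≤ g (t δ) ζ}) '' Set.Iio θ.ord with hT
  have hTsub : T ⊆ I := by
    rintro _ ⟨ζ, hζ, rfl⟩
    exact (hfC ζ hζ).2
  have hTcard : #T < Order.succ (Cardinal.lift.{1} θ) := by
    refine lt_of_le_of_lt (le_trans Cardinal.mk_image_le ?_) (Order.lt_succ _)
    rw [Ordinal.mk_Iio_ordinal, Cardinal.card_ord]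
  have hA : ⋃₀ T ∈ I := hIcomp T hTsub hTcard
  -- contradiction with OBB_χ
  refine htpos fm (fun α _ => (hfmmem α).1) (hI.mono _ hA _ ?_)
  intro δ hδ
  obtain ⟨hδS, hδle⟩ := hδ
  -- the family {h α : α ∈ C δ} is a ≤κ-sized subfamily of F (t δ)
  have hsubF : h '' C δ ⊆ F (t δ) := by
    rintro _ ⟨α, hα, rfl⟩
    exact Fmono (fm α) (t δ) (hδle α hα) (htlt δ hδS) (hfmmem α).2
  have hcard : #(h '' C δ) ≤ Cardinal.lift.{1} κ := by
    refine le_trans Cardinal.mk_image_le ?_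
    have := hCotp δ hδS
    have hcc : #(C δ) = Cardinal.lift.{1} κ := by
      have h1 : (otp (C δ)).card = #(C δ) := Ordinal.card_type _
      rw [this] at h1
      rw [← h1, ← Ordinal.lift_card, Cardinal.card_ord]
    exact le_of_eq hcc
  obtain ⟨ζ, -, hζθ, hdom⟩ :=
    (hg (t δ) (htlt δ hδS)).2 (h '' C δ) hsubF hcard 0 h0θ
  refine ⟨{δ' ∈ S | ∀ α ∈ C δ', fC ζ α ≤ g (t δ') ζ}, ⟨ζ, hζθ, rfl⟩, hδS, ?_⟩
  intro α hα
  have hαDom : α ∈ Dom := Set.mem_biUnion hδS hα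
  simpa only [hh, if_pos hαDom] using hdom (h α) ⟨α, hα, rfl⟩
end

section
/- Let θ > σ be regular cardinals. If cf(𝔡_{θ,σ}) > θ, then cf(𝔡_{θ,σ}) ∈ 𝔇_{θ,σ}. -/
open Set Cardinal

universe u v

/-- `g` is a `(<σ)`-bound of `F ⊆ θ^θ`: for every subfamily `F'` of cardinality `< σ`,
the set of `ε < θ` where `g` dominates all of `F'` is unbounded in `θ`. -/
def IsBoundLT (θ σ : Cardinal.{0}) (F : Set (Ordinal → Ordinal)) (g : Ordinal → Ordinal) :
    Prop :=
  ∀ F' ⊆ F, #F' < Cardinal.lift.{1} σ →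
    ∀ α < θ.ord, ∃ ε, α ≤ ε ∧ ε < θ.ord ∧ ∀ f ∈ F', f ε ≤ g ε

/-- `𝔡_{θ,σ}`: the least cardinality of a family `F ⊆ θ^θ` admitting no `(<σ)`-bound. -/
noncomputable def dLT (θ σ : Cardinal.{0}) : Cardinal.{1} :=
  sInf {c | ∃ F : Set (Ordinal → Ordinal), (∀ f ∈ F, onDom θ f) ∧ #F = c ∧
    ¬ ∃ g, onDom θ g ∧ IsBoundLT θ σ F g}

/-- `𝔇_{θ,σ}`: the set of regular cardinals `χ > θ` for which there is a `⊆`-increasing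
sequence `⟨F_ε : ε < χ⟩` of subsets of `θ^θ`, covering `θ^θ`, each admitting a
`(<σ)`-bound. -/
def DsetLT (θ σ : Cardinal.{0}) : Set Cardinal.{1} :=
  {χ | χ.IsRegular ∧ Cardinal.lift.{1} θ < χ ∧
    ∃ F : Ordinal.{1} → Set (Ordinal.{0} → Ordinal.{0}),
      (∀ ε₁ ε₂, ε₁ ≤ ε₂ → ε₂ < χ.ord → F ε₁ ⊆ F ε₂) ∧
      (∀ ε < χ.ord, ∀ f ∈ F ε, onDom θ f) ∧
      (∀ ε < χ.ord, ∃ g, onDom θ g ∧ IsBoundLT θ σ (F ε) g) ∧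
      (∀ f, onDom θ f → ∃ ε < χ.ord, f ∈ F ε)}

instance stmt13IsWellOrder (o : Ordinal.{u}) : IsWellOrder o.ToType (· < ·) :=
  isWellOrder_lt

namespace Stmt13Aux

lemma isRegular_lift {σ : Cardinal.{0}} (h : σ.IsRegular) :
    (Cardinal.lift.{1} σ).IsRegular := by
  constructor
  · simpa using Cardinal.lift_le.{1,0}.mpr h.1
  · rw [← Cardinal.lift_ord, ← Ordinal.lift_cof]
    exact Cardinal.lift_le.mpr h.2

/-- A set of fewer than `θ` ordinals below `θ.ord` is bounded below `θ.ord`. -/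
lemma exists_ub (θ : Cardinal.{0}) (hθ : θ.IsRegular) (S : Set Ordinal.{0})
    (hS : #S < Cardinal.lift.{1} θ) (hmem : ∀ x ∈ S, x < θ.ord) :
    ∃ b < θ.ord, ∀ x ∈ S, x ≤ b := by
  obtain ⟨c₀, hc₀lt, hc₀⟩ := Cardinal.lt_lift_iff.mp hS
  have he : Nonempty (c₀.out ≃ ↥S) := by
    rw [← Cardinal.lift_mk_eq']
    simp [hc₀]
  obtain ⟨e⟩ := he
  refine ⟨iSup (fun i : c₀.out => ((e i : Ordinal.{0}))), ?_, ?_⟩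
  · apply Ordinal.iSup_lt_ord
    · rwa [Cardinal.mk_out, hθ.cof_eq]
    · exact fun i => hmem _ (e i).2
  · intro x hx
    have := Ordinal.le_iSup (fun i : c₀.out => ((e i : Ordinal.{0}))) (e.symm ⟨x, hx⟩)
    simpa using this

/-- Pointwise supremum of a family of functions. -/
noncomputable def sup2 (X : Set (Ordinal → Ordinal)) (α : Ordinal) : Ordinal :=
  sSup ((fun f => f α) '' X)

lemma sup2_le {X : Set (Ordinal → Ordinal)} {α c : Ordinal} (h : ∀ f ∈ X, f α ≤ c) :
    sup2 X α ≤ c :=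
  csSup_le' (by rintro v ⟨y, hy, rfl⟩; exact h y hy)

lemma le_sup2 (θ : Cardinal.{0}) (hθ : θ.IsRegular) {X : Set (Ordinal → Ordinal)}
    (hX : #X < Cardinal.lift.{1} θ) {α : Ordinal} (hα : α < θ.ord)
    (hdom : ∀ f ∈ X, onDom θ f) {f : Ordinal → Ordinal} (hf : f ∈ X) :
    f α ≤ sup2 X α := by
  obtain ⟨b, hb, hball⟩ := exists_ub θ hθ ((fun f => f α) '' X)
    (lt_of_le_of_lt Cardinal.mk_image_le hX)
    (by rintro v ⟨y, hy, rfl⟩; exact hdom y hy α hα)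
  exact le_csSup ⟨b, fun v hv => hball v hv⟩ ⟨f, hf, rfl⟩

/-- The family of functions eventually dominated by the pointwise sup of a small subset
of `G`. -/
def famOf (θ σ : Cardinal.{0}) (G : Set (Ordinal → Ordinal)) : Set (Ordinal → Ordinal) :=
  {h | onDom θ h ∧ ∃ X ⊆ G, #X < Cardinal.lift.{1} σ ∧
    ∃ β < θ.ord, ∀ α, β ≤ α → α < θ.ord → h α ≤ sup2 X α}

lemma famOf_mono (θ σ : Cardinal.{0}) {G₁ G₂ : Set (Ordinal → Ordinal)} (h : G₁ ⊆ G₂) :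
    famOf θ σ G₁ ⊆ famOf θ σ G₂ := by
  rintro x ⟨hdom, X, hX, hc, β, hβ, ht⟩
  exact ⟨hdom, X, hX.trans h, hc, β, hβ, ht⟩

lemma famOf_bound (θ σ : Cardinal.{0}) (hθ : θ.IsRegular) (hσ : σ.IsRegular) (hσθ : σ < θ)
    {G : Set (Ordinal → Ordinal)} {g : Ordinal → Ordinal}
    (hgb : IsBoundLT θ σ G g) : IsBoundLT θ σ (famOf θ σ G) g := by
  intro F' hF' hF'card α₀ hα₀
  have hmem' : ∀ h : ↥F', ∃ X, X ⊆ G ∧ #X < Cardinal.lift.{1} σ ∧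
      ∃ β, β < θ.ord ∧ ∀ α, β ≤ α → α < θ.ord → (h : Ordinal → Ordinal) α ≤ sup2 X α :=
    fun h => (hF' h.2).2
  choose X hXsub hXcard β hβlt htail using hmem'
  have hYsub : (⋃ h : ↥F', X h) ⊆ G := Set.iUnion_subset hXsub
  have hYcard : #(⋃ h : ↥F', X h) < Cardinal.lift.{1} σ := by
    refine lt_of_le_of_lt (Cardinal.mk_iUnion_le X) ?_
    exact Cardinal.mul_lt_of_lt (isRegular_lift hσ).1 hF'card
      (Cardinal.iSup_lt_of_isRegular (isRegular_lift hσ) hF'card hXcard)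
  obtain ⟨b, hb, hball⟩ := exists_ub θ hθ (Set.range fun h : ↥F' => β h)
    (lt_of_le_of_lt Cardinal.mk_range_le (hF'card.trans (Cardinal.lift_lt.mpr hσθ)))
    (by rintro x ⟨h, rfl⟩; exact hβlt h)
  obtain ⟨ε', hε'₁, hε'₂, hε'dom⟩ := hgb _ hYsub hYcard (max α₀ b) (max_lt hα₀ hb)
  refine ⟨ε', le_trans (le_max_left _ _) hε'₁, hε'₂, ?_⟩
  intro h hh
  have h1 : h ε' ≤ sup2 (X ⟨h, hh⟩) ε' :=
    htail ⟨h, hh⟩ ε'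
      (le_trans (hball _ ⟨⟨h, hh⟩, rfl⟩) (le_trans (le_max_right _ _) hε'₁)) hε'₂
  exact le_trans h1 (sup2_le fun y hy => hε'dom y (Set.mem_iUnion.mpr ⟨⟨h, hh⟩, hy⟩))

lemma dLT_mem (θ σ : Cardinal.{0}) (hθ : ℵ₀ ≤ θ) (hσ : ℵ₀ ≤ σ) :
    ∃ F : Set (Ordinal → Ordinal), (∀ f ∈ F, onDom θ f) ∧ #F = dLT θ σ ∧
      ¬ ∃ g, onDom θ g ∧ IsBoundLT θ σ F g := by
  have hne : {c : Cardinal.{1} | ∃ F : Set (Ordinal → Ordinal), (∀ f ∈ F, onDom θ f) ∧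
      Cardinal.mk F = c ∧ ¬ ∃ g, onDom θ g ∧ IsBoundLT θ σ F g}.Nonempty := by
    refine ⟨_, {f | onDom θ f}, fun f hf => hf, rfl, ?_⟩
    rintro ⟨g, hg, hbd⟩
    have hlim := Cardinal.isSuccLimit_ord hθ
    set g1 : Ordinal → Ordinal := fun ε => g ε + 1 with hg1
    have hg1dom : onDom θ g1 := by
      intro ε hε
      have := hlim.succ_lt (hg ε hε)
      show g ε + 1 < θ.ord
      rwa [Ordinal.add_one_eq_succ]
    obtain ⟨ε, hε₁, hε₂, hdom⟩ := hbd {g1}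
      (by intro x hx; rw [Set.mem_singleton_iff] at hx; subst hx; exact hg1dom)
      (by rw [Cardinal.mk_singleton]
          exact Cardinal.one_lt_aleph0.trans_le
            (by simpa using Cardinal.lift_le.{1,0}.mpr hσ))
      0 hlim.pos
    have h2 := hdom g1 (Set.mem_singleton _)
    rw [hg1] at h2
    simp only [Ordinal.add_one_eq_succ, Order.succ_le_iff] at h2
    exact lt_irrefl _ h2
  exact csInf_mem hne

lemma exists_bound_of_lt (θ σ : Cardinal.{0}) {G : Set (Ordinal → Ordinal)}
    (hdom : ∀ f ∈ G, onDom θ f) (hlt : #G < dLT θ σ) :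
    ∃ g, onDom θ g ∧ IsBoundLT θ σ G g := by
  by_contra h
  exact absurd (csInf_le (OrderBot.bddBelow _)
    (show #G ∈ {c : Cardinal.{1} | ∃ F : Set (Ordinal → Ordinal), (∀ f ∈ F, onDom θ f) ∧
      Cardinal.mk F = c ∧ ¬ ∃ g, onDom θ g ∧ IsBoundLT θ σ F g} from ⟨G, hdom, rfl, h⟩))
    (not_le.mpr hlt)

end Stmt13Aux

/-- Let `θ > σ` be regular. If `cf(𝔡_{θ,σ}) > θ` then
`cf(𝔡_{θ,σ}) ∈ 𝔇_{θ,σ}`. -/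
theorem stmt13 (θ σ : Cardinal.{0})
    (hθ : θ.IsRegular) (hσ : σ.IsRegular) (hσθ : σ < θ)
    (hcf : Cardinal.lift.{1} θ < ((dLT θ σ).ord).cof) :
    ((dLT θ σ).ord).cof ∈ DsetLT θ σ := by
  obtain ⟨F, hFdom, hFcard, hFnb⟩ := Stmt13Aux.dLT_mem θ σ hθ.1 hσ.1
  set 𝔡 := dLT θ σ with h𝔡def
  set χ := (𝔡.ord).cof with hχdef
  have hℵχ : ℵ₀ < χ :=
    lt_of_le_of_lt (by simpa using Cardinal.lift_le.{1,0}.mpr hθ.1) hcf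
  have hlim : Order.IsSuccLimit (𝔡.ord) := by
    rcases Ordinal.zero_or_succ_or_isSuccLimit 𝔡.ord with h | ⟨a, ha⟩ | h
    · rw [hχdef, h, Ordinal.cof_zero] at hℵχ
      exact absurd hℵχ Cardinal.aleph0_pos.asymm
    · rw [hχdef, ← ha, Ordinal.cof_succ] at hℵχ
      exact absurd hℵχ Cardinal.one_lt_aleph0.asymm
    · exact h
  have hreg : χ.IsRegular := Cardinal.isRegular_cof hlim
  obtain ⟨δ, hδ⟩ := Ordinal.exists_fundamental_sequence 𝔡.ord
  have hT : #(↥F) = #((𝔡.ord).ToType) := by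
    rw [hFcard, Cardinal.mk_toType, Cardinal.card_ord]
  obtain ⟨e⟩ := Cardinal.eq.mp hT
  set ι : ↥F → Ordinal.{1} :=
    fun x => Ordinal.typein ((· < ·) : (𝔡.ord).ToType → (𝔡.ord).ToType → Prop) (e x) with hι
  have hιlt : ∀ x, ι x < 𝔡.ord := fun x => Ordinal.typein_lt_self (e x)
  set d : Ordinal.{1} → Ordinal.{1} :=
    fun ε => if h : ε < χ.ord then δ ε h else 0 with hd
  set G : Ordinal.{1} → Set (Ordinal → Ordinal) :=
    fun ε => {x | ∃ h : x ∈ F, ι ⟨x, h⟩ ≤ d ε} with hG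
  have hGsub : ∀ ε, G ε ⊆ F := fun ε x hx => hx.choose
  have hGdom : ∀ ε, ∀ f ∈ G ε, onDom θ f := fun ε f hf => hFdom f (hGsub ε hf)
  have hdlt : ∀ ε < χ.ord, d ε < 𝔡.ord := by
    intro ε hε
    rw [hd]
    simp only [dif_pos hε]
    have h1 := Ordinal.lt_blsub.{1,1} δ ε hε
    rwa [hδ.blsub_eq] at h1
  have hdmono : ∀ ε₁ ε₂, ε₁ ≤ ε₂ → ε₂ < χ.ord → d ε₁ ≤ d ε₂ := by
    intro ε₁ ε₂ h12 h2
    have h1 : ε₁ < χ.ord := lt_of_le_of_lt h12 h2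
    rw [hd]
    simp only [dif_pos h1, dif_pos h2]
    rcases lt_or_eq_of_le h12 with h | h
    · exact (hδ.2.1 h1 h2 h).le
    · subst h
      rfl
  have hGcard : ∀ ε < χ.ord, #(G ε) < 𝔡 := by
    intro ε hε
    have h1 : d ε + 1 < 𝔡.ord := by
      rw [Ordinal.add_one_eq_succ]
      exact hlim.succ_lt (hdlt ε hε)
    have h1' : d ε + 1 < Ordinal.type ((· < ·) : (𝔡.ord).ToType → (𝔡.ord).ToType → Prop) := by
      rwa [Ordinal.type_toType]
    obtain ⟨t₁, ht₁⟩ := Ordinal.typein_surj ((· < ·) : (𝔡.ord).ToType → (𝔡.ord).ToType → Prop) h1'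
    have hinj : #(G ε) ≤ #{y : (𝔡.ord).ToType // y < t₁} := by
      refine Cardinal.mk_le_of_injective
        (f := fun x : ↥(G ε) => (⟨e ⟨x.1, x.2.choose⟩, ?_⟩ : {y : (𝔡.ord).ToType // y < t₁})) ?_
      · have hlt : Ordinal.typein ((· < ·) : (𝔡.ord).ToType → (𝔡.ord).ToType → Prop)
            (e ⟨x.1, x.2.choose⟩) < Ordinal.typein ((· < ·) : (𝔡.ord).ToType → (𝔡.ord).ToType → Prop) t₁ := by
          rw [ht₁]
          refine lt_of_le_of_lt x.2.choose_spec ?_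
          rw [Ordinal.add_one_eq_succ]
          exact Order.lt_succ _
        exact (Ordinal.typein_lt_typein _).mp hlt
      · intro x y hxy
        have h2 : e ⟨x.1, x.2.choose⟩ = e ⟨y.1, y.2.choose⟩ := congrArg Subtype.val hxy
        have h3 : (⟨x.1, x.2.choose⟩ : ↥F) = ⟨y.1, y.2.choose⟩ := e.injective h2
        have h4 : x.1 = y.1 := Subtype.mk_eq_mk.mp h3
        exact Subtype.ext h4
    have hcard : #{y : (𝔡.ord).ToType // y < t₁} = (d ε + 1).card := by
      rw [← ht₁]
      exact Ordinal.card_typein t₁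
    rw [hcard] at hinj
    exact lt_of_le_of_lt hinj (Cardinal.lt_ord.mp h1)
  refine ⟨hreg, hcf, fun ε => Stmt13Aux.famOf θ σ (G ε), ?_, ?_, ?_, ?_⟩
  · intro ε₁ ε₂ h12 h2
    refine Stmt13Aux.famOf_mono θ σ (fun x hx => ?_)
    exact ⟨hx.choose, le_trans hx.choose_spec (hdmono ε₁ ε₂ h12 h2)⟩
  · intro ε hε f hf
    exact hf.1
  · intro ε hε
    obtain ⟨g, hgdom, hgb⟩ := Stmt13Aux.exists_bound_of_lt θ σ (hGdom ε) (hGcard ε hε)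
    exact ⟨g, hgdom, Stmt13Aux.famOf_bound θ σ hθ hσ hσθ hgb⟩
  · intro f hf
    have hnb : ¬ IsBoundLT θ σ F f := fun hb => hFnb ⟨f, hf, hb⟩
    unfold IsBoundLT at hnb
    push_neg at hnb
    obtain ⟨X, hXF, hXcard, α₀, hα₀, hfail⟩ := hnb
    have hι' : ∀ x : ↥X, ∃ i, ∃ hi : i < χ.ord, ι ⟨x.1, hXF x.2⟩ ≤ δ i hi := by
      intro x
      have h := hιlt ⟨x.1, hXF x.2⟩
      rw [← hδ.blsub_eq] at h
      exact Ordinal.lt_blsub_iff.{1,1}.mp h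
    choose i hi hile using hι'
    have hε : iSup i < χ.ord := by
      apply Ordinal.iSup_lt_ord _ hi
      rw [hreg.cof_eq]
      exact lt_trans (lt_trans hXcard (Cardinal.lift_lt.mpr hσθ)) hcf
    refine ⟨iSup i, hε, hf, X, ?_, hXcard, α₀, hα₀, ?_⟩
    · intro x hx
      refine ⟨hXF hx, ?_⟩
      have h1 : i ⟨x, hx⟩ ≤ iSup i := Ordinal.le_iSup i ⟨x, hx⟩
      have hdi : d (i ⟨x, hx⟩) = δ (i ⟨x, hx⟩) (hi ⟨x, hx⟩) := by
        rw [hd]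
        simp only [dif_pos (hi ⟨x, hx⟩)]
      refine le_trans (hile ⟨x, hx⟩) ?_
      rw [← hdi]
      exact hdmono _ _ h1 hε
    · intro α hα₁ hα₂
      obtain ⟨h, hhX, hfh⟩ := hfail α hα₁ hα₂
      exact le_of_lt (lt_of_lt_of_le hfh
        (Stmt13Aux.le_sup2 θ hθ (hXcard.trans (Cardinal.lift_lt.mpr hσθ)) hα₂
          (fun y hy => hFdom y (hXF hy)) hhX))
end

section
/- Let θ > σ be regular cardinals. Then cf(𝔡_{θ,σ}) ∉ [σ, θ]; that is, either cf(𝔡_{θ,σ}) < σ or cf(𝔡_{θ,σ}) > θ. -/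
open Set Cardinal

universe u v

theorem dLT_set_nonempty (θ σ : Cardinal.{0}) (hθ : θ.IsRegular) (hσ : σ.IsRegular) :
    {c : Cardinal.{1} | ∃ F : Set (Ordinal → Ordinal), (∀ f ∈ F, onDom θ f) ∧ #F = c ∧
      ¬ ∃ g, onDom θ g ∧ IsBoundLT θ σ F g}.Nonempty := by
  classical
  refine ⟨#{f | onDom θ f}, {f | onDom θ f}, fun f hf => hf, rfl, ?_⟩
  rintro ⟨g, hg, hb⟩
  have hlim : Order.IsSuccLimit (θ.ord) := Cardinal.isSuccLimit_ord hθ.aleph0_le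
  set f : Ordinal → Ordinal := fun ε => if ε < θ.ord then g ε + 1 else 0 with hf
  have hfdom : onDom θ f := by
    intro ε hε
    simp only [hf, if_pos hε]
    rw [Ordinal.add_one_eq_succ]
    exact hlim.succ_lt (hg ε hε)
  have h1 : #({f} : Set (Ordinal → Ordinal)) < Cardinal.lift.{1} σ := by
    rw [Cardinal.mk_singleton]
    exact lt_of_lt_of_le Cardinal.one_lt_aleph0 (Cardinal.aleph0_le_lift.mpr hσ.aleph0_le)
  obtain ⟨ε, -, hε, hd⟩ := hb {f} (by simpa using hfdom) h1 0 hlim.pos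
  have hle := hd f rfl
  simp only [hf, if_pos hε] at hle
  rw [Ordinal.add_one_eq_succ] at hle
  exact absurd hle (Order.lt_succ (g ε)).not_ge

/-- Let `θ > σ` be regular. Then `cf(𝔡_{θ,σ}) ∉ [σ, θ]`:
either `cf(𝔡_{θ,σ}) < σ` or `cf(𝔡_{θ,σ}) > θ`. -/
theorem stmt14 (θ σ : Cardinal.{0})
    (hθ : θ.IsRegular) (hσ : σ.IsRegular) (hσθ : σ < θ) :
    ((dLT θ σ).ord).cof < Cardinal.lift.{1} σ ∨
      Cardinal.lift.{1} θ < ((dLT θ σ).ord).cof := by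
  classical
  by_contra hcon
  push_neg at hcon
  obtain ⟨h1, h2⟩ := hcon
  have hlim : Order.IsSuccLimit (θ.ord) := Cardinal.isSuccLimit_ord hθ.aleph0_le
  have hmem : dLT θ σ ∈ {c : Cardinal.{1} | ∃ F : Set (Ordinal → Ordinal),
      (∀ f ∈ F, onDom θ f) ∧ #F = c ∧ ¬ ∃ g, onDom θ g ∧ IsBoundLT θ σ F g} := by
    rw [dLT]; exact csInf_mem (dLT_set_nonempty θ σ hθ hσ)
  obtain ⟨F, hFdom, hFcard, hFnb⟩ := hmem
  have hmin : ∀ G : Set (Ordinal → Ordinal), (∀ f ∈ G, onDom θ f) → #G < dLT θ σ →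
      ∃ g, onDom θ g ∧ IsBoundLT θ σ G g := by
    intro G hGdom hGlt
    by_contra hng
    have : dLT θ σ ≤ #G := by
      rw [dLT]; exact csInf_le' ⟨G, hGdom, rfl, hng⟩
    exact absurd hGlt this.not_gt
  obtain ⟨S, hSunb, hScard⟩ :=
    Order.exists_cof_eq (dLT θ σ).ord.ToType
  rw [Ordinal.cof_toType] at hScard
  -- the embedding of S into Iio θ.ord
  have hSle : #S ≤ #(Iio θ.ord) := by
    rw [Ordinal.mk_Iio_ordinal, Cardinal.card_ord, hScard]
    exact h2
  obtain ⟨e⟩ := (Cardinal.le_def _ _).mp hSle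
  -- the enumeration of F
  have hA : #((dLT θ σ).ord.ToType) = #F := by
    rw [Cardinal.mk_ord_toType, hFcard]
  obtain ⟨φ⟩ := Cardinal.eq.mp hA
  -- bounds for initial segments
  have hFset : ∀ x : S, ∃ g, onDom θ g ∧
      IsBoundLT θ σ
        ((fun y : (dLT θ σ).ord.ToType => (φ y : Ordinal → Ordinal)) '' Iio (x : _)) g := by
    intro x
    apply hmin
    · rintro f ⟨y, -, rfl⟩; exact hFdom _ (φ y).2
    · exact lt_of_le_of_lt Cardinal.mk_image_le (Cardinal.mk_Iio_ord_toType (c := dLT θ σ) (x : _))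
  choose g hgdom hgbd using hFset
  -- the diagonal bound
  set h : Ordinal → Ordinal := fun ε =>
    if ε < θ.ord then sSup ((fun x : S => g x ε) '' {x : S | (e x : Ordinal) < ε}) else 0
    with hh
  have hbdd : ∀ ε, ε < θ.ord →
      BddAbove ((fun x : S => g x ε) '' {x : S | (e x : Ordinal) < ε}) := by
    intro ε hε
    refine ⟨θ.ord, ?_⟩
    rintro v ⟨x, -, rfl⟩
    exact le_of_lt (hgdom x ε hε)
  have hhdom : onDom θ h := by
    intro ε hε
    set V := (fun x : S => g x ε) '' {x : S | (e x : Ordinal) < ε} with hV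
    have hVsub : ∀ v ∈ V, v < θ.ord := by
      rintro v ⟨x, -, rfl⟩; exact hgdom x ε hε
    have hVcard : #V < Cardinal.lift.{1} θ := by
      refine lt_of_le_of_lt Cardinal.mk_image_le ?_
      refine lt_of_le_of_lt (Cardinal.mk_le_of_injective
        (f := fun x : {x : S | (e x : Ordinal) < ε} => (⟨(e x.1 : Ordinal), x.2⟩ : Iio ε)) ?_) ?_
      · intro a b hab
        simp only [Subtype.mk.injEq] at hab
        exact Subtype.ext (e.injective (Subtype.ext (congrArg (fun z : Iio ε => (z : Ordinal)) hab)))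
      · rw [Ordinal.mk_Iio_ordinal]
        exact Cardinal.lift_lt.2 (Cardinal.lt_ord.mp hε)
    have hsmall : Small.{0} V := Ordinal.bddAbove_iff_small.mp (hbdd ε hε)
    have hrange : Set.range (fun w : Shrink.{0} V => ((equivShrink V).symm w : Ordinal)) = V := by
      ext v
      constructor
      · rintro ⟨w, rfl⟩; exact ((equivShrink V).symm w).2
      · intro hv; exact ⟨equivShrink V ⟨v, hv⟩, by simp⟩
    have hWlt : #(Shrink.{0} V) < θ := by
      refine Cardinal.lift_lt.{_, 1}.mp ?_
      rw [Cardinal.lift_mk_shrink'' V]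
      exact hVcard
    have hsup : sSup V < θ.ord := by
      rw [← hrange, sSup_range]
      refine Ordinal.iSup_lt_ord ?_ ?_
      · rwa [hθ.cof_eq]
      · intro w
        exact hVsub _ ((equivShrink V).symm w).2
    show h ε < θ.ord
    rw [hh]
    simp only [if_pos hε]
    exact hsup
  have hbound : IsBoundLT θ σ F h := by
    intro F' hF'sub hF'card α hα
    have hTcard : #{y : (dLT θ σ).ord.ToType | (φ y : Ordinal → Ordinal) ∈ F'} <
        Order.cof (dLT θ σ).ord.ToType := by
      rw [Ordinal.cof_toType]
      refine lt_of_le_of_lt ?_ (lt_of_lt_of_le hF'card h1)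
      refine Cardinal.mk_le_of_injective
        (f := fun y : {y : (dLT θ σ).ord.ToType | (φ y : Ordinal → Ordinal) ∈ F'} =>
          (⟨(φ y.1 : Ordinal → Ordinal), y.2⟩ : F')) ?_
      intro a b hab
      simp only [Subtype.mk.injEq] at hab
      exact Subtype.ext (φ.injective (Subtype.ext hab))
    obtain ⟨a, ha⟩ : ∃ a, ∀ b ∈ {y : (dLT θ σ).ord.ToType | (φ y : Ordinal → Ordinal) ∈ F'}, b < a := by
      by_contra hna
      push_neg at hna
      exact absurd hTcard (not_lt.mpr (Order.cof_le
        (s := {y : (dLT θ σ).ord.ToType | (φ y : Ordinal → Ordinal) ∈ F'}) hna))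
    obtain ⟨x, hxS, hxa⟩ := hSunb a
    have hsub2 : F' ⊆ (fun y : (dLT θ σ).ord.ToType => (φ y : Ordinal → Ordinal)) ''
        Iio (((⟨x, hxS⟩ : S) : _)) := by
      intro f hf
      refine ⟨φ.symm ⟨f, hF'sub hf⟩, ?_, by simp⟩
      have hmemT : φ.symm ⟨f, hF'sub hf⟩ ∈
          {y : (dLT θ σ).ord.ToType | (φ y : Ordinal → Ordinal) ∈ F'} := by
        simp only [Set.mem_setOf_eq, Equiv.apply_symm_apply]
        exact hf
      exact lt_of_lt_of_le (ha _ hmemT) hxa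
    have hex : (e ⟨x, hxS⟩ : Ordinal) < θ.ord := (e ⟨x, hxS⟩).2
    have hα' : max α (Order.succ (e ⟨x, hxS⟩ : Ordinal)) < θ.ord :=
      max_lt hα (hlim.succ_lt hex)
    obtain ⟨ε, hε1, hε2, hε3⟩ := hgbd ⟨x, hxS⟩ F' hsub2 hF'card _ hα'
    refine ⟨ε, le_trans (le_max_left _ _) hε1, hε2, ?_⟩
    intro f hf
    have hgh : g ⟨x, hxS⟩ ε ≤ h ε := by
      have hmem : g ⟨x, hxS⟩ ε ∈ (fun x : S => g x ε) '' {x : S | (e x : Ordinal) < ε} :=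
        ⟨⟨x, hxS⟩, lt_of_lt_of_le (Order.lt_succ _) (le_trans (le_max_right _ _) hε1), rfl⟩
      have hcomp : h ε = sSup ((fun x : S => g x ε) '' {x : S | (e x : Ordinal) < ε}) := by
        rw [hh]; simp only [if_pos hε2]
      rw [hcomp]
      exact le_csSup (hbdd ε hε2) hmem
    exact le_trans (hε3 f hf) hgh
  exact hFnb ⟨h, hhdom, hbound⟩
end
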